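/- arXiv:1501.04079 — 2 statements merged into one kernel-verified Lean document; each statement's English description precedes it below -/
import Mathlib

section
/- Let Γ be a countable discrete group, (X,μ) a standard probability space, K the Cantor set, and a_n, a measure-preserving actions of Γ on (X,μ). Then d(a_n,a) → 0 if and only if the closures of E(a_n,K) converge to the closure of E(a,K) in the Hausdorff metric topology on the hyperspace of compact subsets of M_s(K^Γ). In other words, the topology on A_∼(Γ,X,μ) induced by the metric d coincides with the initial topology induced by the map a ↦ closure of E(a,K). -/
open MeasureTheory Filter Topology Set

/-- A measure-preserving action of a group `Γ` on a measure space `(X, μ)`. -/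
structure MPAction (Γ : Type*) [Group Γ] (X : Type*) [MeasurableSpace X]
    (μ : MeasureTheory.Measure X) where
  act : Γ → X → X
  measurePreserving_act : ∀ γ : Γ, MeasureTheory.MeasurePreserving (act γ) μ μ
  act_one : ∀ x, act 1 x = x
  act_mul : ∀ γ δ x, act (γ * δ) x = act γ (act δ x)

namespace MPAction

variable {Γ : Type*} [Group Γ] {X : Type*} [MeasurableSpace X] {μ : Measure X}
  {Y : Type*} [MeasurableSpace Y] {ν : Measure Y}
  {W : Type*} [MeasurableSpace W] {ρ : Measure W}

/-- Weak containment of measure-preserving actions. -/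
def WeaklyContained (a : MPAction Γ X μ) (b : MPAction Γ Y ν) : Prop :=
  ∀ (n : ℕ) (A : Fin n → Set X), (∀ i, MeasurableSet (A i)) →
    ∀ (F : Finset Γ) (ε : ℝ), 0 < ε →
      ∃ B : Fin n → Set Y, (∀ i, MeasurableSet (B i)) ∧
        ∀ γ ∈ F, ∀ i j : Fin n,
          |(μ (a.act γ '' A i ∩ A j)).toReal - (ν (b.act γ '' B i ∩ B j)).toReal| < ε

/-- Weak equivalence of measure-preserving actions. -/
def WeakEquiv (a : MPAction Γ X μ) (b : MPAction Γ Y ν) : Prop :=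
  WeaklyContained a b ∧ WeaklyContained b a

/-- A finite measurable partition of the space. -/
def IsPartition {k : ℕ} (A : Fin k → Set X) : Prop :=
  (∀ i, MeasurableSet (A i)) ∧ Pairwise (Function.onFun Disjoint A) ∧ (⋃ i, A i) = Set.univ

/-- The compact set `C_{n,k}(a) ⊆ [0,1]^{n × k × k}`: the closure of the collection of
matrices of measures `μ(γ_p^a A_q ∩ A_r)` over all measurable `k`-partitions, with respect
to the fixed enumeration `e` of the group. -/
noncomputable def Cnk (e : ℕ → Γ) (a : MPAction Γ X μ) (n k : ℕ) :
    Set ((Fin n × Fin k × Fin k) → ℝ) :=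
  closure { v | ∃ A : Fin k → Set X, IsPartition A ∧
    ∀ (p : Fin n) (q r : Fin k), v (p, q, r) = (μ (a.act (e p.1) '' A q ∩ A r)).toReal }

/-- The metric `d` on weak equivalence classes:
`d(a,b) = Σ_{n,k} 2^{-(n+k)} d_H(C_{n,k}(a), C_{n,k}(b))`. -/
noncomputable def dWE (e : ℕ → Γ) (a : MPAction Γ X μ) (b : MPAction Γ Y ν) : ℝ :=
  ∑' nk : ℕ × ℕ, (2 : ℝ) ^ (-(nk.1 : ℤ) - (nk.2 : ℤ)) *
    Metric.hausdorffDist (Cnk e a nk.1 nk.2) (Cnk e b nk.1 nk.2)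

section Mix

variable {ι : Type*} {Z : ι → Type*} [∀ i, MeasurableSpace (Z i)]

theorem measurable_sigmaMk' (i : ι) : Measurable (@Sigma.mk ι Z i) :=
  measurable_iff_le_map.2 (iInf_le _ i)

theorem measurable_of_sigma {δ : Type*} [MeasurableSpace δ] {f : Sigma Z → δ}
    (hf : ∀ i, Measurable (f ∘ Sigma.mk i)) : Measurable f := by
  intro s hs
  rw [Sigma.instMeasurableSpace, MeasurableSpace.measurableSet_iInf]
  intro i
  exact hf i hs

/-- The measure `Σ_i λ_i ν_i` on the disjoint union `⊔_i Z_i`. -/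
noncomputable def mixMeasure (lam : ι → ℝ) (νs : ∀ i, Measure (Z i)) :
    Measure ((i : ι) × Z i) :=
  Measure.sum fun i => ENNReal.ofReal (lam i) • (νs i).map (Sigma.mk i)

instance mixMeasure.instSFinite [Countable ι] (lam : ι → ℝ) (νs : ∀ i, Measure (Z i))
    [∀ i, SFinite (νs i)] : SFinite (mixMeasure lam νs) := by
  unfold mixMeasure
  infer_instance

/-- The convex combination `Σ_i λ_i a_i` of measure-preserving actions, acting on the
disjoint union `⊔_i Z_i` with the measure `Σ_i λ_i ν_i`. -/
noncomputable def mix [Countable ι] {νs : ∀ i, Measure (Z i)} (lam : ι → ℝ)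
    (a : ∀ i, MPAction Γ (Z i) (νs i)) : MPAction Γ ((i : ι) × Z i) (mixMeasure lam νs) where
  act γ p := ⟨p.1, (a p.1).act γ p.2⟩
  measurePreserving_act γ := by
    have hmeas : Measurable fun p : (i : ι) × Z i => (⟨p.1, (a p.1).act γ p.2⟩ : (i : ι) × Z i) := by
      apply measurable_of_sigma
      intro i
      exact (measurable_sigmaMk' i).comp ((a i).measurePreserving_act γ).measurable
    refine ⟨hmeas, ?_⟩
    refine Measure.ext fun s hs => ?_
    rw [Measure.map_apply hmeas hs]
    rw [mixMeasure, Measure.sum_apply _ (hmeas hs), Measure.sum_apply _ hs]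
    congr 1
    funext i
    rw [Measure.smul_apply, Measure.smul_apply,
      Measure.map_apply (measurable_sigmaMk' i) (hmeas hs),
      Measure.map_apply (measurable_sigmaMk' i) hs]
    congr 1
    have hpre : (Sigma.mk i) ⁻¹'
        ((fun p : (i : ι) × Z i => (⟨p.1, (a p.1).act γ p.2⟩ : (i : ι) × Z i)) ⁻¹' s)
        = ((a i).act γ) ⁻¹' (Sigma.mk i ⁻¹' s) := rfl
    rw [hpre]
    exact ((a i).measurePreserving_act γ).measure_preimage
      ((measurable_sigmaMk' i) hs).nullMeasurableSet
  act_one p := by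
    cases p with
    | mk i x => simp only [(a i).act_one]
  act_mul γ δ p := by
    cases p with
    | mk i x => simp only [(a i).act_mul]

end Mix

/-- The binary convex combination `t a + (1 - t) b` of two actions on `(X, μ)`,
realized on the disjoint union of two copies of `X` carrying measures `tμ` and `(1-t)μ`. -/
noncomputable def convComb (t : ℝ) (a b : MPAction Γ X μ) :
    MPAction Γ ((_ : Fin 2) × X) (mixMeasure ![t, 1 - t] fun _ => μ) :=
  mix (νs := fun _ => μ) ![t, 1 - t] ![a, b]

/-- The trivial action. -/
def trivAction (Γ : Type*) [Group Γ] (Y : Type*) [MeasurableSpace Y] (ν : Measure Y) :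
    MPAction Γ Y ν where
  act _ y := y
  measurePreserving_act _ := MeasurePreserving.id ν
  act_one _ := rfl
  act_mul _ _ _ := rfl

/-- The product of two measure-preserving actions. -/
noncomputable def prodAction [SFinite μ] [SFinite ν] (a : MPAction Γ X μ) (b : MPAction Γ Y ν) :
    MPAction Γ (X × Y) (μ.prod ν) where
  act γ := Prod.map (a.act γ) (b.act γ)
  measurePreserving_act γ := (a.measurePreserving_act γ).prod (b.measurePreserving_act γ)
  act_one p := by simp [Prod.map, a.act_one, b.act_one]
  act_mul γ δ p := by simp [Prod.map, a.act_mul, b.act_mul]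

/-- Stable weak containment: `a ≺_s b` iff `a ≺ ι × b`, where `ι` is the trivial action of `Γ`
on the standard probability space `(X₀, μ₀)`. -/
def StableWeaklyContained {X₀ : Type*} [MeasurableSpace X₀] (μ₀ : Measure X₀) [SFinite μ₀]
    (a : MPAction Γ W ρ) (b : MPAction Γ Y ν) [SFinite ν] : Prop :=
  WeaklyContained a (prodAction (trivAction Γ X₀ μ₀) b)

/-- Stable weak equivalence. -/
def StableWeakEquiv {X₀ : Type*} [MeasurableSpace X₀] (μ₀ : Measure X₀) [SFinite μ₀]
    (a : MPAction Γ W ρ) [SFinite ρ] (b : MPAction Γ Y ν) [SFinite ν] : Prop :=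
  StableWeaklyContained μ₀ a b ∧ StableWeaklyContained μ₀ b a

/-- An action is ergodic if every strictly invariant measurable set is null or conull. -/
def IsErgodicAction (a : MPAction Γ X μ) : Prop :=
  ∀ A : Set X, MeasurableSet A → (∀ γ, a.act γ ⁻¹' A = A) → μ A = 0 ∨ μ Aᶜ = 0

/-- An action is (essentially) free if almost every point has trivial stabilizer. -/
def IsFreeAction (a : MPAction Γ X μ) : Prop :=
  ∀ᵐ x ∂μ, ∀ γ : Γ, γ ≠ 1 → a.act γ x ≠ x

end MPAction

section Cylinders

/-- The Cantor set. -/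
abbrev Cantor : Type := ℕ → Bool

/-- Basic clopen subsets of the Cantor set: sets determined by finitely many coordinates. -/
def cantorBasic : Set (Set Cantor) :=
  { B | ∃ (s : Finset ℕ) (σ : ℕ → Bool), B = {x : Cantor | ∀ n ∈ s, x n = σ n} }

/-- The clopen cylinder subsets of `K^Γ` of the form `π_F⁻¹(Π_{γ ∈ F} A_γ)` with `F ⊆ Γ`
finite and each `A_γ` a basic clopen subset of the Cantor set `K`. -/
def KCyl (Γ : Type*) : Set (Set (Γ → Cantor)) :=
  { C | ∃ (F : Finset Γ) (B : Γ → Set Cantor),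
      (∀ γ ∈ F, B γ ∈ cantorBasic) ∧ C = {f | ∀ γ ∈ F, f γ ∈ B γ} }

/-- The basic clopen cylinder subsets of `L^Γ` for a finite set `L`:
sets of the form `∩_{γ ∈ F} π_γ⁻¹({j_γ})`. -/
def LCyl (Γ : Type*) (L : Type*) : Set (Set (Γ → L)) :=
  { C | ∃ (F : Finset Γ) (j : Γ → L), C = {f | ∀ γ ∈ F, f γ = j γ} }

/-- `A` enumerates the collection of sets `S`. -/
def Enumerates {M : Type*} (A : ℕ → Set M) (S : Set (Set M)) : Prop :=
  (∀ i, A i ∈ S) ∧ ∀ C ∈ S, ∃ i, A i = C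

/-- The compatible metric `δ(ν,ρ) = Σ_i 2^{-(i+1)} |ν(A_i) - ρ(A_i)|` on the space of
probability measures, determined by an enumeration `A` of a generating family of sets. -/
noncomputable def deltaEnum {M : Type*} [MeasurableSpace M] (A : ℕ → Set M)
    (m m' : MeasureTheory.Measure M) : ℝ :=
  ∑' i : ℕ, (2 : ℝ) ^ (-(i : ℤ) - 1) * |(m (A i)).toReal - (m' (A i)).toReal|

/-- Convergence of a sequence of sets of measures to a set of measures in the Hausdorff
(metric) sense, with respect to a metric `δ`: for every `ε > 0`, eventually each of the two
sets is contained in the `ε`-neighbourhood of the other.  (Equivalently, the closures converge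
in the Hausdorff metric topology on the hyperspace of compact subsets.) -/
def HausTendsto {M : Type*} [MeasurableSpace M]
    (δ : MeasureTheory.Measure M → MeasureTheory.Measure M → ℝ)
    (En : ℕ → Set (MeasureTheory.Measure M)) (E : Set (MeasureTheory.Measure M)) : Prop :=
  ∀ ε : ℝ, 0 < ε → ∃ N : ℕ, ∀ n ≥ N,
    (∀ m ∈ En n, ∃ m' ∈ E, δ m m' < ε) ∧ (∀ m' ∈ E, ∃ m ∈ En n, δ m m' < ε)

variable {Γ : Type*} [Group Γ] {X : Type*} [MeasurableSpace X] {μ : MeasureTheory.Measure X}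

/-- The map `Φ^{φ,a} : X → S^Γ`, `Φ^{φ,a}(x)(γ) = φ((γ⁻¹)^a x)`, associated to an observable
`φ : X → S` and an action `a`. -/
def MPAction.phiMap (a : MPAction Γ X μ) {S : Type*} (φ : X → S) : X → (Γ → S) :=
  fun x γ => φ (a.act γ⁻¹ x)

/-- The set `E(a,S) = {(Φ^{φ,a})_* μ : φ : X → S measurable}` of shift-invariant measures
on `S^Γ` associated to the action `a`. -/
noncomputable def MPAction.ESet (a : MPAction Γ X μ) (S : Type*) [MeasurableSpace S] :
    Set (MeasureTheory.Measure (Γ → S)) :=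
  { m | ∃ φ : X → S, Measurable φ ∧ m = μ.map (a.phiMap φ) }

end Cylinders

/-! ### Auxiliary development for the main theorem -/

section WEAux

set_option linter.unusedSectionVars false

open MPAction
open scoped ENNReal

variable {Γ : Type*} [Group Γ] {X : Type*} [MeasurableSpace X] {μ : Measure X}

namespace MPAction

theorem act_inv_act (a : MPAction Γ X μ) (γ : Γ) (x : X) : a.act γ⁻¹ (a.act γ x) = x := by
  rw [← a.act_mul, inv_mul_cancel, a.act_one]

theorem act_act_inv (a : MPAction Γ X μ) (γ : Γ) (x : X) : a.act γ (a.act γ⁻¹ x) = x := by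
  rw [← a.act_mul, mul_inv_cancel, a.act_one]

theorem image_act (a : MPAction Γ X μ) (γ : Γ) (s : Set X) :
    a.act γ '' s = a.act γ⁻¹ ⁻¹' s := by
  ext x
  constructor
  · rintro ⟨y, hy, rfl⟩
    simpa [a.act_inv_act] using hy
  · intro hx
    exact ⟨a.act γ⁻¹ x, hx, a.act_act_inv γ x⟩

theorem mem_image_act (a : MPAction Γ X μ) {γ : Γ} {s : Set X} {x : X} :
    x ∈ a.act γ '' s ↔ a.act γ⁻¹ x ∈ s := by rw [a.image_act]; rfl

theorem image_act_one (a : MPAction Γ X μ) (s : Set X) : a.act (1 : Γ) '' s = s := by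
  rw [a.image_act, inv_one]
  ext x
  simp [a.act_one]

theorem measurableSet_image_act (a : MPAction Γ X μ) (γ : Γ) {s : Set X}
    (hs : MeasurableSet s) : MeasurableSet (a.act γ '' s) := by
  rw [a.image_act]
  exact (a.measurePreserving_act γ⁻¹).measurable hs

theorem measurable_phiMap (a : MPAction Γ X μ) {S : Type*} [MeasurableSpace S] {φ : X → S}
    (hφ : Measurable φ) : Measurable (a.phiMap φ) :=
  measurable_pi_lambda _ fun γ => hφ.comp (a.measurePreserving_act γ⁻¹).measurable

theorem phiMap_mem_iff (a : MPAction Γ X μ) {S : Type*} {φ : X → S} {x : X} {γ : Γ}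
    {U : Set S} : a.phiMap φ x γ ∈ U ↔ x ∈ a.act γ '' (φ ⁻¹' U) := by
  rw [a.mem_image_act]; rfl

theorem IsPartition.exists_mem {k : ℕ} {A : Fin k → Set X} (hP : IsPartition A) (x : X) :
    ∃ i, x ∈ A i := by
  have h := hP.2.2
  rw [Set.eq_univ_iff_forall] at h
  exact Set.mem_iUnion.1 (h x)

theorem exists_isPartition {k : ℕ} (hk : 0 < k) : ∃ A : Fin k → Set X, IsPartition A := by
  classical
  refine ⟨fun q => if q = ⟨0, hk⟩ then Set.univ else ∅, fun i => ?_, ?_, ?_⟩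
  · dsimp only
    split_ifs
    exacts [MeasurableSet.univ, MeasurableSet.empty]
  · intro i j hij
    show Disjoint (if i = ⟨0, hk⟩ then Set.univ else (∅:Set X)) (if j = ⟨0, hk⟩ then Set.univ else (∅:Set X))
    split_ifs with h1 h2 h2
    · exact absurd (h1.trans h2.symm) hij
    · exact disjoint_bot_right
    · exact disjoint_bot_left
    · exact disjoint_bot_left
  · refine Set.eq_univ_iff_forall.2 fun x => Set.mem_iUnion.2 ⟨⟨0, hk⟩, by simp⟩

theorem not_isPartition_zero [Nonempty X] (A : Fin 0 → Set X) : ¬ IsPartition A := by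
  intro h
  obtain ⟨i, _⟩ := h.exists_mem (Classical.arbitrary X)
  exact i.elim0

end MPAction

theorem nonempty_of_isProbabilityMeasure (μ : Measure X) [IsProbabilityMeasure μ] :
    Nonempty X := by
  by_contra h
  rw [not_nonempty_iff] at h
  have h0 : μ Set.univ = 0 := by rw [Set.univ_eq_empty_iff.2 h]; exact measure_empty
  exact one_ne_zero ((measure_univ (μ := μ)).symm.trans h0)

section pidx

variable {I : Type*} {P : I → Set X}

noncomputable def pidx (P : I → Set X) (h : ∀ x, ∃ i, x ∈ P i) (x : X) : I :=
  (h x).choose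

theorem pidx_mem (h : ∀ x, ∃ i, x ∈ P i) (x : X) : x ∈ P (pidx P h x) :=
  (h x).choose_spec

theorem pidx_eq (h : ∀ x, ∃ i, x ∈ P i) (hd : Pairwise (Function.onFun Disjoint P))
    {x : X} {i : I} (hx : x ∈ P i) : pidx P h x = i := by
  by_contra hne
  exact Set.disjoint_left.1 (hd hne) (pidx_mem h x) hx

theorem measurable_comp_pidx {β : Type*} [MeasurableSpace β] [Countable I]
    (h : ∀ x, ∃ i, x ∈ P i) (hd : Pairwise (Function.onFun Disjoint P))
    (hm : ∀ i, MeasurableSet (P i)) (f : I → β) :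
    Measurable (fun x => f (pidx P h x)) := by
  intro s _
  have hset : (fun x => f (pidx P h x)) ⁻¹' s = ⋃ (i : I) (_ : f i ∈ s), P i := by
    ext x
    simp only [Set.mem_preimage, Set.mem_iUnion]
    exact ⟨fun hx => ⟨pidx P h x, hx, pidx_mem h x⟩,
      fun ⟨i, hfi, hxi⟩ => by rwa [pidx_eq h hd hxi]⟩
  rw [hset]
  exact MeasurableSet.iUnion fun i => MeasurableSet.iUnion fun _ => hm i

end pidx

section mreal

theorem mreal_le_one {M : Type*} [MeasurableSpace M] (m : Measure M) [IsProbabilityMeasure m]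
    (s : Set M) : (m s).toReal ≤ 1 := by
  have h := prob_le_one (μ := m) (s := s)
  calc (m s).toReal ≤ (1 : ℝ≥0∞).toReal := ENNReal.toReal_mono ENNReal.one_ne_top h
    _ = 1 := ENNReal.toReal_one

variable [IsFiniteMeasure μ]

theorem mreal_mono {s t : Set X} (h : s ⊆ t) : (μ s).toReal ≤ (μ t).toReal :=
  ENNReal.toReal_mono (measure_ne_top μ t) (measure_mono h)

theorem mreal_union_le (μ : Measure X) [IsFiniteMeasure μ] {s t u : Set X} (h : s ⊆ t ∪ u) :
    (μ s).toReal ≤ (μ t).toReal + (μ u).toReal := by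
  have h1 : μ s ≤ μ t + μ u := le_trans (measure_mono h) (measure_union_le t u)
  calc (μ s).toReal ≤ (μ t + μ u).toReal :=
        ENNReal.toReal_mono (ENNReal.add_ne_top.2 ⟨measure_ne_top μ t, measure_ne_top μ u⟩) h1
    _ = (μ t).toReal + (μ u).toReal := ENNReal.toReal_add (measure_ne_top μ t) (measure_ne_top μ u)

theorem mreal_biUnion (μ : Measure X) [IsFiniteMeasure μ] {I : Type*} (S : Finset I)
    (R : I → Set X) (hm : ∀ i, MeasurableSet (R i))
    (hd : Pairwise (Function.onFun Disjoint R)) :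
    (μ (⋃ i ∈ S, R i)).toReal = ∑ i ∈ S, (μ (R i)).toReal := by
  rw [measure_biUnion_finset (hd.set_pairwise _) fun i _ => hm i]
  exact ENNReal.toReal_sum fun i _ => measure_ne_top μ _

theorem mreal_iUnion_le (μ : Measure X) [IsFiniteMeasure μ] {J : Type*} [Fintype J]
    (f : J → Set X) : (μ (⋃ j, f j)).toReal ≤ ∑ j, (μ (f j)).toReal := by
  calc (μ (⋃ j, f j)).toReal ≤ (∑ j, μ (f j)).toReal :=
        ENNReal.toReal_mono (by
          exact (ENNReal.sum_lt_top.2 fun j _ => measure_lt_top μ _).ne)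
          (measure_iUnion_fintype_le μ f)
    _ = ∑ j, (μ (f j)).toReal := ENNReal.toReal_sum fun j _ => measure_ne_top μ _

end mreal

end WEAux

section WEAux2

set_option linter.unusedSectionVars false

open MPAction
open scoped ENNReal

theorem measurableSet_cantorBasic {B : Set Cantor} (hB : B ∈ cantorBasic) :
    MeasurableSet B := by
  obtain ⟨s, σ, rfl⟩ := hB
  have h : {x : Cantor | ∀ n ∈ s, x n = σ n}
      = ⋂ (n : ℕ) (_ : n ∈ s), (fun x : Cantor => x n) ⁻¹' {σ n} := by
    ext x
    simp [Set.mem_iInter]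
  rw [h]
  exact MeasurableSet.iInter fun n => MeasurableSet.iInter fun _ =>
    (measurable_pi_apply n) (measurableSet_singleton _)

theorem measurableSet_KCyl {Γ : Type*} [Countable Γ] {C : Set (Γ → Cantor)}
    (hC : C ∈ KCyl Γ) : MeasurableSet C := by
  obtain ⟨F, B, hB, rfl⟩ := hC
  have h : {f : Γ → Cantor | ∀ γ ∈ F, f γ ∈ B γ}
      = ⋂ (γ : Γ) (_ : γ ∈ F), (fun f : Γ → Cantor => f γ) ⁻¹' B γ := by
    ext f
    simp [Set.mem_iInter]
  rw [h]
  exact MeasurableSet.iInter fun γ => MeasurableSet.iInter fun hγ =>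
    (measurable_pi_apply γ) (measurableSet_cantorBasic (hB γ hγ))

/-! ### A clopen partition of the Cantor set into `k` pieces -/

def uSet (k : ℕ) (q : Fin k) : Set Cantor :=
  {x | ∀ i ∈ Finset.range (min ((q : ℕ) + 1) (k - 1)), x i = decide (i = (q : ℕ))}

def uPoint (k : ℕ) (q : Fin k) : Cantor := fun i => decide (i = (q : ℕ))

theorem uSet_mem_cantorBasic (k : ℕ) (q : Fin k) : uSet k q ∈ cantorBasic :=
  ⟨Finset.range (min ((q : ℕ) + 1) (k - 1)), fun i => decide (i = (q : ℕ)), rfl⟩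

theorem uPoint_mem (k : ℕ) (q : Fin k) : uPoint k q ∈ uSet k q := fun _ _ => rfl

theorem uSet_disjoint (k : ℕ) : Pairwise (Function.onFun Disjoint (uSet k)) := by
  have key : ∀ q r : Fin k, (q : ℕ) < (r : ℕ) → ∀ x, x ∈ uSet k q → x ∈ uSet k r → False := by
    intro q r hqr x hq hr
    have hrk : (r : ℕ) < k := r.isLt
    have h1 : x q = true := by
      have h := hq (q : ℕ) (Finset.mem_range.2 (lt_min (by omega) (by omega)))
      simpa using h
    have h2 : x q = false := by
      have h := hr (q : ℕ) (Finset.mem_range.2 (lt_min (by omega) (by omega)))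
      rwa [decide_eq_false (by omega : ¬ (q : ℕ) = (r : ℕ))] at h
    rw [h1] at h2
    exact Bool.noConfusion h2
  intro q r hqr
  rcases Nat.lt_or_ge (q : ℕ) (r : ℕ) with h | h
  · exact Set.disjoint_left.2 fun x hq hr => (key q r h x hq hr).elim
  · have hlt : (r : ℕ) < (q : ℕ) := by
      rcases Nat.eq_or_lt_of_le h with heq | hlt
      · exact absurd (Fin.ext heq.symm) hqr
      · exact hlt
    exact Set.disjoint_left.2 fun x hq hr => (key r q hlt x hr hq).elim

theorem uSet_cover (k : ℕ) (hk : 0 < k) (x : Cantor) : ∃ q, x ∈ uSet k q := by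
  by_cases hx : ∃ i, i < k - 1 ∧ x i = true
  · obtain ⟨hj1, hj2⟩ := Nat.find_spec hx
    refine ⟨⟨Nat.find hx, by omega⟩, ?_⟩
    intro i hi
    rw [Finset.mem_range] at hi
    have hmin : min (Nat.find hx + 1) (k - 1) = Nat.find hx + 1 := by omega
    rw [hmin] at hi
    show x i = decide (i = Nat.find hx)
    rcases Nat.lt_or_ge i (Nat.find hx) with h | h
    · have hni : ¬ (i < k - 1 ∧ x i = true) := Nat.find_min hx h
      have hxi : x i = false := by
        by_contra hh
        exact hni ⟨by omega, by simpa using hh⟩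
      rw [hxi, decide_eq_false (by omega)]
    · have : i = Nat.find hx := by omega
      subst this
      rw [hj2, decide_eq_true rfl]
  · refine ⟨⟨k - 1, by omega⟩, ?_⟩
    intro i hi
    rw [Finset.mem_range] at hi
    have hmin : min ((k - 1) + 1) (k - 1) = k - 1 := by omega
    rw [hmin] at hi
    push_neg at hx
    show x i = decide (i = k - 1)
    have hxi : x i = false := by
      have := hx i
      rcases hb : x i with _ | _
      · rfl
      · exact absurd hb (by simpa using this hi)
    rw [hxi, decide_eq_false (by omega)]

theorem uPoint_mem_uSet_iff {k : ℕ} (q r : Fin k) : uPoint k q ∈ uSet k r ↔ q = r := by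
  constructor
  · intro h
    by_contra hne
    exact Set.disjoint_left.1 (uSet_disjoint k hne) (uPoint_mem k q) h
  · rintro rfl
    exact uPoint_mem k q

variable {Γ : Type*} [Group Γ] {X : Type*} [MeasurableSpace X] {μ : MeasureTheory.Measure X}

theorem isPartition_preimage_uSet {k : ℕ} (hk : 0 < k) {ψ : X → Cantor} (hψ : Measurable ψ) :
    MPAction.IsPartition (fun q : Fin k => ψ ⁻¹' uSet k q) := by
  refine ⟨fun q => hψ (measurableSet_cantorBasic (uSet_mem_cantorBasic k q)), ?_, ?_⟩
  · intro q r hqr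
    exact (uSet_disjoint k hqr).preimage ψ
  · refine Set.eq_univ_iff_forall.2 fun x => ?_
    obtain ⟨q, hq⟩ := uSet_cover k hk (ψ x)
    exact Set.mem_iUnion.2 ⟨q, hq⟩

/-! ### The two finitary approximation relations -/

def Close1 {Γ X : Type*} [Group Γ] [MeasurableSpace X] (μ : MeasureTheory.Measure X)
    (e : ℕ → Γ) (a b : MPAction Γ X μ) (n k : ℕ) (ε : ℝ) : Prop :=
  ∀ P : Fin k → Set X, MPAction.IsPartition P → ∃ B : Fin k → Set X,
    MPAction.IsPartition B ∧ ∀ (p : Fin n) (q r : Fin k),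
      |(μ (a.act (e p.1) '' P q ∩ P r)).toReal - (μ (b.act (e p.1) '' B q ∩ B r)).toReal| ≤ ε

def CloseE {Γ X : Type*} [Group Γ] [MeasurableSpace X] (μ : MeasureTheory.Measure X)
    (A : ℕ → Set (Γ → Cantor)) (a b : MPAction Γ X μ) (N : ℕ) (ε : ℝ) : Prop :=
  ∀ φ : X → Cantor, Measurable φ → ∃ ψ : X → Cantor, Measurable ψ ∧
    ∀ i < N, |((μ.map (a.phiMap φ)) (A i)).toReal - ((μ.map (b.phiMap ψ)) (A i)).toReal| ≤ ε

end WEAux2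

section WEAux3

set_option linter.unusedSectionVars false
set_option maxHeartbeats 1000000

open MPAction
open scoped ENNReal

variable {Γ X : Type*} [Group Γ] [Countable Γ] [MeasurableSpace X]

/-- The pushforward of `μ` under `Φ^{φ,a}` evaluated on the basic cylinders determined by
`uSet`. -/
theorem map_phiMap_cyl_one (μ : MeasureTheory.Measure X) (c : MPAction Γ X μ)
    {χ : X → Cantor} (hχ : Measurable χ) {k : ℕ} (q : Fin k) :
    (μ.map (c.phiMap χ)) {f : Γ → Cantor | f 1 ∈ uSet k q} = μ (χ ⁻¹' uSet k q) := by
  have hM : MeasurableSet {f : Γ → Cantor | f 1 ∈ uSet k q} :=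
    (measurable_pi_apply 1) (measurableSet_cantorBasic (uSet_mem_cantorBasic k q))
  rw [MeasureTheory.Measure.map_apply (c.measurable_phiMap hχ) hM]
  congr 1
  ext x
  simp only [Set.mem_preimage, Set.mem_setOf_eq]
  rw [c.phiMap_mem_iff, c.image_act_one]
  exact Iff.rfl

theorem map_phiMap_cyl_two (μ : MeasureTheory.Measure X) (c : MPAction Γ X μ)
    {χ : X → Cantor} (hχ : Measurable χ) {k : ℕ} (γ : Γ) (q r : Fin k) :
    (μ.map (c.phiMap χ)) {f : Γ → Cantor | f 1 ∈ uSet k r ∧ f γ ∈ uSet k q}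
      = μ ((χ ⁻¹' uSet k r) ∩ c.act γ '' (χ ⁻¹' uSet k q)) := by
  have hM : MeasurableSet {f : Γ → Cantor | f 1 ∈ uSet k r ∧ f γ ∈ uSet k q} := by
    have heq : {f : Γ → Cantor | f 1 ∈ uSet k r ∧ f γ ∈ uSet k q}
        = ((fun f : Γ → Cantor => f 1) ⁻¹' uSet k r) ∩ ((fun f : Γ → Cantor => f γ) ⁻¹' uSet k q) := rfl
    rw [heq]
    exact ((measurable_pi_apply 1) (measurableSet_cantorBasic (uSet_mem_cantorBasic k r))).inter
      ((measurable_pi_apply γ) (measurableSet_cantorBasic (uSet_mem_cantorBasic k q)))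
  rw [MeasureTheory.Measure.map_apply (c.measurable_phiMap hχ) hM]
  congr 1
  ext x
  simp only [Set.mem_preimage, Set.mem_setOf_eq, Set.mem_inter_iff]
  rw [c.phiMap_mem_iff (U := uSet k r), c.image_act_one, c.phiMap_mem_iff (U := uSet k q)]
  exact Iff.rfl

theorem lemB (μ : MeasureTheory.Measure X) [MeasureTheory.IsProbabilityMeasure μ]
    (e : ℕ → Γ) (A : ℕ → Set (Γ → Cantor)) (hA : Enumerates A (KCyl Γ))
    (n k : ℕ) (ε : ℝ) (hε : 0 < ε) :
    ∃ N : ℕ, ∀ a b : MPAction Γ X μ, CloseE μ A a b N ε → Close1 μ e a b n k ε := by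
  classical
  -- the finitely many cylinder sets needed
  set cyl : Fin n × Fin k × Fin k → Set (Γ → Cantor) := fun pqr =>
    if e pqr.1.1 = 1 then {f | f 1 ∈ uSet k pqr.2.1}
    else {f | f 1 ∈ uSet k pqr.2.2 ∧ f (e pqr.1.1) ∈ uSet k pqr.2.1} with hcyl
  have hcylK : ∀ pqr, cyl pqr ∈ KCyl Γ := by
    rintro ⟨p, q, r⟩
    by_cases h1 : e p.1 = 1
    · refine ⟨{1}, fun _ => uSet k q, fun γ _ => uSet_mem_cantorBasic k q, ?_⟩
      simp only [hcyl, h1, if_pos]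
      ext f
      simp
    · refine ⟨{1, e p.1}, fun γ => if γ = 1 then uSet k r else uSet k q, ?_, ?_⟩
      · intro γ _
        dsimp only
        split_ifs
        exacts [uSet_mem_cantorBasic k r, uSet_mem_cantorBasic k q]
      · simp only [hcyl, h1, if_neg, if_false]
        ext f
        constructor
        · rintro ⟨hf1, hf2⟩ γ hγ
          rcases Finset.mem_insert.1 hγ with rfl | hγ
          · simpa using hf1
          · rw [Finset.mem_singleton] at hγ
            subst hγ
            rw [if_neg h1]
            exact hf2
        · intro hf
          refine ⟨?_, ?_⟩
          · have := hf 1 (Finset.mem_insert_self _ _)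
            simpa using this
          · have := hf (e p.1) (Finset.mem_insert_of_mem (Finset.mem_singleton_self _))
            rwa [if_neg h1] at this
  choose idx hidx using fun pqr => hA.2 (cyl pqr) (hcylK pqr)
  refine ⟨(Finset.univ.sup idx) + 1, ?_⟩
  intro a b hCE P hP
  have hX : Nonempty X := MeasureTheory.nonempty_of_isProbabilityMeasure μ
  rcases Nat.eq_zero_or_pos k with hk0 | hk
  · exfalso
    subst hk0
    exact MPAction.not_isPartition_zero P hP
  have hcov : ∀ x, ∃ q, x ∈ P q := hP.exists_mem
  set φ : X → Cantor := fun x => uPoint k (pidx P hcov x) with hφdef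
  have hφ : Measurable φ := measurable_comp_pidx hcov hP.2.1 hP.1 (uPoint k)
  obtain ⟨ψ, hψ, hdiff⟩ := hCE φ hφ
  set B : Fin k → Set X := fun q => ψ ⁻¹' uSet k q with hBdef
  have hBpart : IsPartition B := isPartition_preimage_uSet hk hψ
  have hφpre : ∀ q : Fin k, φ ⁻¹' uSet k q = P q := by
    intro q
    ext x
    simp only [Set.mem_preimage, hφdef]
    constructor
    · intro hx
      have h := (uPoint_mem_uSet_iff _ _).1 hx
      rw [← h]
      exact pidx_mem hcov x
    · intro hx
      rw [pidx_eq hcov hP.2.1 hx]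
      exact uPoint_mem k q
  refine ⟨B, hBpart, ?_⟩
  intro p q r
  have hiN : idx (p, q, r) < (Finset.univ.sup idx) + 1 :=
    Nat.lt_succ_of_le (Finset.le_sup (Finset.mem_univ _))
  have hD := hdiff (idx (p, q, r)) hiN
  rw [hidx (p, q, r)] at hD
  by_cases h1 : e p.1 = 1
  · rw [h1, a.image_act_one, b.image_act_one]
    by_cases hqr : q = r
    · subst hqr
      rw [Set.inter_self, Set.inter_self]
      simp only [hcyl, h1, if_pos] at hD
      rw [map_phiMap_cyl_one μ a hφ q, map_phiMap_cyl_one μ b hψ q, hφpre q] at hD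
      exact hD
    · have hP0 : P q ∩ P r = ∅ := Set.disjoint_iff_inter_eq_empty.1 (hP.2.1 hqr)
      have hB0 : B q ∩ B r = ∅ := Set.disjoint_iff_inter_eq_empty.1 (hBpart.2.1 hqr)
      rw [hP0, hB0]
      simpa using le_of_lt hε
  · simp only [hcyl, h1, if_neg, if_false] at hD
    rw [map_phiMap_cyl_two μ a hφ (e p.1) q r, map_phiMap_cyl_two μ b hψ (e p.1) q r,
      hφpre q, hφpre r] at hD
    rw [Set.inter_comm (a.act (e p.1) '' P q), Set.inter_comm (b.act (e p.1) '' B q)]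
    exact hD

end WEAux3

section WEAux4

set_option linter.unusedSectionVars false
set_option maxHeartbeats 2000000

open MPAction
open scoped ENNReal

variable {Γ X : Type*} [Group Γ] [Countable Γ] [MeasurableSpace X]

theorem lemA (μ : MeasureTheory.Measure X) [MeasureTheory.IsProbabilityMeasure μ]
    (e : ℕ → Γ) (he : Function.Surjective e)
    (A : ℕ → Set (Γ → Cantor)) (hA : Enumerates A (KCyl Γ)) (N : ℕ) (ε : ℝ) (hε : 0 < ε) :
    ∃ (n k : ℕ) (ε₁ : ℝ), 0 < ε₁ ∧
      ∀ a b : MPAction Γ X μ, Close1 μ e a b n k ε₁ → CloseE μ A a b N ε := by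
  classical
  -- decompose the cylinders A i
  choose F B hBmem hAeq using hA.1
  have hbasic : ∀ (i : ℕ) (γ : Γ), ∃ (s : Finset ℕ) (σ : ℕ → Bool),
      γ ∈ F i → B i γ = {x : Cantor | ∀ n ∈ s, x n = σ n} := by
    intro i γ
    by_cases h : γ ∈ F i
    · obtain ⟨s, σ, hs⟩ := hBmem i γ h
      exact ⟨s, σ, fun _ => hs⟩
    · exact ⟨∅, fun _ => false, fun hh => absurd hh h⟩
  choose s σ hsσ using hbasic
  set FF : Finset Γ := insert 1 ((Finset.range N).biUnion F) with hFF
  have h1FF : (1 : Γ) ∈ FF := Finset.mem_insert_self _ _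
  have hFiFF : ∀ i < N, ∀ γ ∈ F i, γ ∈ FF := fun i hi γ hγ =>
    Finset.mem_insert_of_mem (Finset.mem_biUnion.2 ⟨i, Finset.mem_range.2 hi, hγ⟩)
  set ss : Finset ℕ := (Finset.range N).biUnion (fun i => (F i).biUnion (s i)) with hss
  have hsss : ∀ i < N, ∀ γ ∈ F i, ∀ nn ∈ s i γ, nn ∈ ss := fun i hi γ hγ nn hnn =>
    Finset.mem_biUnion.2 ⟨i, Finset.mem_range.2 hi, Finset.mem_biUnion.2 ⟨γ, hγ, hnn⟩⟩
  -- the index type of the join partition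
  set K := Fintype.card ({γ // γ ∈ FF} → {nn // nn ∈ ss} → Bool) with hK
  set κ : ({γ // γ ∈ FF} → {nn // nn ∈ ss} → Bool) ≃ Fin K :=
    Fintype.equivFin ({γ // γ ∈ FF} → {nn // nn ∈ ss} → Bool) with hκ
  -- choose n covering FF
  choose pg hpg using fun (γ : Γ) (_ : γ ∈ FF) => he γ
  set n := (FF.attach.sup fun γ => pg ↑γ γ.2) + 1 with hn
  have hpn : ∀ γ (hγ : γ ∈ FF), pg γ hγ < n := by
    intro γ hγ
    have h : pg γ hγ ≤ FF.attach.sup fun γ => pg ↑γ γ.2 :=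
      Finset.le_sup (f := fun x : {γ // γ ∈ FF} => pg ↑x x.2) (Finset.mem_attach FF ⟨γ, hγ⟩)
    omega
  set Kr := (K : ℝ) with hKr
  set Cst : ℝ := (FF.card : ℝ) * Kr ^ 2 + Kr + 1 with hCst
  have hKr0 : 0 ≤ Kr := by rw [hKr]; exact Nat.cast_nonneg K
  have hCpos : (0 : ℝ) < Cst := by
    have h1 : 0 ≤ (FF.card : ℝ) * Kr ^ 2 := mul_nonneg (Nat.cast_nonneg _) (sq_nonneg _)
    rw [hCst]
    linarith
  have hεC : (0:ℝ) < ε / Cst := div_pos hε hCpos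
  refine ⟨n, K, ε / Cst, hεC, ?_⟩
  intro a b hclose φ hφ
  -- the join partition for (a, φ)
  set G : X → ({γ // γ ∈ FF} → {nn // nn ∈ ss} → Bool) :=
    fun x γ nn => φ (a.act (↑γ)⁻¹ x) ↑nn with hG
  set Q : ({γ // γ ∈ FF} → {nn // nn ∈ ss} → Bool) → Set X := fun η => G ⁻¹' {η} with hQ
  have hGmeas : Measurable G :=
    measurable_pi_lambda _ fun γ => measurable_pi_lambda _ fun nn =>
      (measurable_pi_apply (↑nn : ℕ)).comp (hφ.comp (a.measurePreserving_act (↑γ)⁻¹).measurable)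
  have hQmeas : ∀ η, MeasurableSet (Q η) := fun η => hGmeas (measurableSet_singleton η)
  have hQdisj : Pairwise (Function.onFun Disjoint Q) := by
    intro η η' hne
    refine Set.disjoint_left.2 fun x hx hx' => hne ?_
    simp only [hQ, Set.mem_preimage, Set.mem_singleton_iff] at hx hx'
    rw [← hx, ← hx']
  have hQcov : ∀ x, ∃ η, x ∈ Q η := fun x => ⟨G x, rfl⟩
  have hQuniv : (⋃ η, Q η) = Set.univ :=
    Set.eq_univ_iff_forall.2 fun x => Set.mem_iUnion.2 (hQcov x)
  have hQpart : MPAction.IsPartition (fun q : Fin K => Q (κ.symm q)) := by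
    refine ⟨fun q => hQmeas _, ?_, ?_⟩
    · intro q r hqr
      exact hQdisj fun hh => hqr (κ.symm.injective hh)
    · rw [κ.symm.surjective.iUnion_comp Q]
      exact hQuniv
  obtain ⟨R', hR'part, hent'⟩ := hclose _ hQpart
  set R : ({γ // γ ∈ FF} → {nn // nn ∈ ss} → Bool) → Set X := fun η => R' (κ η) with hR
  have hRmeas : ∀ η, MeasurableSet (R η) := fun η => hR'part.1 _
  have hRdisj : Pairwise (Function.onFun Disjoint R) := fun η η' hne =>
    hR'part.2.1 fun hh => hne (κ.injective hh)
  have hRcov : ∀ x, ∃ η, x ∈ R η := by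
    intro x
    have h := hR'part.2.2
    rw [Set.eq_univ_iff_forall] at h
    obtain ⟨q, hq⟩ := Set.mem_iUnion.1 (h x)
    refine ⟨κ.symm q, ?_⟩
    simpa [hR, Equiv.apply_symm_apply] using hq
  have hent : ∀ γ (hγ : γ ∈ FF) (η η' : {γ // γ ∈ FF} → {nn // nn ∈ ss} → Bool),
      |(μ (a.act γ '' Q η ∩ Q η')).toReal - (μ (b.act γ '' R η ∩ R η')).toReal| ≤ ε / Cst := by
    intro γ hγ η η'
    have h := hent' ⟨pg γ hγ, hpn γ hγ⟩ (κ η) (κ η')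
    simpa [hpg γ hγ, Equiv.symm_apply_apply, hR] using h
  -- build the observable ψ for b
  set gR := pidx R hRcov with hgR
  set extend : ({nn // nn ∈ ss} → Bool) → Cantor :=
    fun τ nn => if h : nn ∈ ss then τ ⟨nn, h⟩ else false with hextend
  set ψ : X → Cantor := fun x => extend (gR x ⟨1, h1FF⟩) with hψdef
  have hψ : Measurable ψ :=
    measurable_comp_pidx hRcov hRdisj hRmeas (fun η => extend (η ⟨1, h1FF⟩))
  refine ⟨ψ, hψ, ?_⟩
  intro i hiN
  have hAi : MeasurableSet (A i) := measurableSet_KCyl (hA.1 i)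
  rw [MeasureTheory.Measure.map_apply (a.measurable_phiMap hφ) hAi,
    MeasureTheory.Measure.map_apply (b.measurable_phiMap hψ) hAi]
  set Comp : Finset ({γ // γ ∈ FF} → {nn // nn ∈ ss} → Bool) := Finset.univ.filter
    (fun η => ∀ (γ : {γ // γ ∈ FF}) (nn : {nn // nn ∈ ss}),
      ↑γ ∈ F i → ↑nn ∈ s i ↑γ → η γ nn = σ i ↑γ ↑nn) with hComp
  -- the `a`-side preimage is a union of join-partition pieces
  have hT' : (a.phiMap φ) ⁻¹' (A i) = ⋃ η ∈ Comp, Q η := by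
    ext x
    simp only [Set.mem_preimage, hAeq i, Set.mem_setOf_eq, Set.mem_iUnion]
    constructor
    · intro hx
      refine ⟨G x, Finset.mem_filter.2 ⟨Finset.mem_univ _, ?_⟩, rfl⟩
      intro γ nn hγF hnns
      have h2 := hx ↑γ hγF
      rw [hsσ i ↑γ hγF] at h2
      exact h2 ↑nn hnns
    · rintro ⟨η, hηComp, hxη⟩
      have hGx : G x = η := hxη
      intro γ hγF
      rw [hsσ i γ hγF]
      intro nn hnn
      have h3 := (Finset.mem_filter.1 hηComp).2 ⟨γ, hFiFF i hiN γ hγF⟩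
        ⟨nn, hsss i hiN γ hγF nn hnn⟩ hγF hnn
      show φ (a.act γ⁻¹ x) nn = σ i γ nn
      rw [← h3, ← hGx]
  -- the bad set
  set Bad : Set X := ⋃ (γ : {γ // γ ∈ FF}),
      ⋃ (p : (({γ // γ ∈ FF} → {nn // nn ∈ ss} → Bool) ×
              ({γ // γ ∈ FF} → {nn // nn ∈ ss} → Bool))),
      ⋃ (_ : p.1 ⟨1, h1FF⟩ ≠ p.2 γ), b.act ↑γ '' R p.1 ∩ R p.2 with hBad
  have hGood : ∀ x, x ∉ Bad → ∀ γ : {γ // γ ∈ FF},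
      gR (b.act (↑γ)⁻¹ x) ⟨1, h1FF⟩ = gR x γ := by
    intro x hx γ
    by_contra hne
    apply hx
    refine Set.mem_iUnion.2 ⟨γ, Set.mem_iUnion.2 ⟨(gR (b.act (↑γ)⁻¹ x), gR x),
      Set.mem_iUnion.2 ⟨hne, ?_, ?_⟩⟩⟩
    · exact (b.mem_image_act).2 (pidx_mem hRcov _)
    · exact pidx_mem hRcov x
  -- off the bad set, the `b`-side preimage coincides with the corresponding union
  have hT : ∀ x, x ∉ Bad → ((b.phiMap ψ) x ∈ A i ↔ x ∈ ⋃ η ∈ Comp, R η) := by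
    intro x hxB
    rw [hAeq i]
    simp only [Set.mem_setOf_eq, Set.mem_iUnion]
    constructor
    · intro hx
      refine ⟨gR x, Finset.mem_filter.2 ⟨Finset.mem_univ _, ?_⟩, pidx_mem hRcov x⟩
      intro γ nn hγF hnns
      have h2 := hx ↑γ hγF
      rw [hsσ i ↑γ hγF] at h2
      have h3 := h2 ↑nn hnns
      -- h3 : ψ (b.act ↑γ⁻¹ x) ↑nn = σ i ↑γ ↑nn
      have h4 : ψ (b.act (↑γ)⁻¹ x) ↑nn = gR x γ nn := by
        simp only [hψdef, hextend]
        rw [dif_pos nn.2]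
        rw [hGood x hxB γ]
      rw [← h4]
      exact h3
    · rintro ⟨η, hηComp, hxη⟩
      have hgx : gR x = η := pidx_eq hRcov hRdisj hxη
      intro γ hγF
      rw [hsσ i γ hγF]
      intro nn hnn
      have hcond := (Finset.mem_filter.1 hηComp).2 ⟨γ, hFiFF i hiN γ hγF⟩
        ⟨nn, hsss i hiN γ hγF nn hnn⟩ hγF hnn
      show ψ (b.act γ⁻¹ x) nn = σ i γ nn
      have h4 : ψ (b.act γ⁻¹ x) nn = gR x ⟨γ, hFiFF i hiN γ hγF⟩ ⟨nn, hsss i hiN γ hγF nn hnn⟩ := by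
        simp only [hψdef, hextend]
        rw [dif_pos (hsss i hiN γ hγF nn hnn)]
        rw [hGood x hxB ⟨γ, hFiFF i hiN γ hγF⟩]
      rw [h4, hgx]
      exact hcond
  -- measure of the bad set
  have hBadBound : (μ Bad).toReal ≤ (FF.card : ℝ) * Kr ^ 2 * (ε / Cst) := by
    have hstep : ∀ (γ : {γ // γ ∈ FF})
        (p : (({γ // γ ∈ FF} → {nn // nn ∈ ss} → Bool) ×
              ({γ // γ ∈ FF} → {nn // nn ∈ ss} → Bool))),
        (μ (⋃ (_ : p.1 ⟨1, h1FF⟩ ≠ p.2 γ), b.act ↑γ '' R p.1 ∩ R p.2)).toReal ≤ ε / Cst := by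
      intro γ p
      by_cases hc : p.1 ⟨1, h1FF⟩ ≠ p.2 γ
      · have hrw : (⋃ (_ : p.1 ⟨1, h1FF⟩ ≠ p.2 γ), b.act ↑γ '' R p.1 ∩ R p.2)
            = b.act ↑γ '' R p.1 ∩ R p.2 := by
          ext y
          simp [hc]
        rw [hrw]
        have hempty : a.act ↑γ '' Q p.1 ∩ Q p.2 = ∅ := by
          rw [Set.eq_empty_iff_forall_notMem]
          rintro x ⟨hx1, hx2⟩
          rw [a.mem_image_act] at hx1
          have hG1 : G (a.act (↑γ)⁻¹ x) = p.1 := hx1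
          have hG2 : G x = p.2 := hx2
          apply hc
          funext nn
          rw [← hG1, ← hG2]
          show φ (a.act (1 : Γ)⁻¹ (a.act (↑γ)⁻¹ x)) ↑nn = φ (a.act (↑γ)⁻¹ x) ↑nn
          rw [inv_one, a.act_one]
        have h := hent ↑γ γ.2 p.1 p.2
        rw [hempty] at h
        simp only [measure_empty, ENNReal.toReal_zero, zero_sub, abs_neg, abs_of_nonneg
          ENNReal.toReal_nonneg] at h
        exact h
      · have hrw : (⋃ (_ : p.1 ⟨1, h1FF⟩ ≠ p.2 γ), b.act ↑γ '' R p.1 ∩ R p.2)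
            = (∅ : Set X) := by
          ext y
          simp [hc]
        rw [hrw]
        simp only [measure_empty, ENNReal.toReal_zero]
        exact le_of_lt hεC
    calc (μ Bad).toReal
        ≤ ∑ γ : {γ // γ ∈ FF}, (μ (⋃ (p : (({γ // γ ∈ FF} → {nn // nn ∈ ss} → Bool) ×
              ({γ // γ ∈ FF} → {nn // nn ∈ ss} → Bool))),
            ⋃ (_ : p.1 ⟨1, h1FF⟩ ≠ p.2 γ), b.act ↑γ '' R p.1 ∩ R p.2)).toReal := by
          rw [hBad]
          exact mreal_iUnion_le μ _
      _ ≤ ∑ γ : {γ // γ ∈ FF}, ∑ p : (({γ // γ ∈ FF} → {nn // nn ∈ ss} → Bool) ×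
              ({γ // γ ∈ FF} → {nn // nn ∈ ss} → Bool)),
            (μ (⋃ (_ : p.1 ⟨1, h1FF⟩ ≠ p.2 γ), b.act ↑γ '' R p.1 ∩ R p.2)).toReal :=
          Finset.sum_le_sum fun γ _ => mreal_iUnion_le μ _
      _ ≤ ∑ _γ : {γ // γ ∈ FF}, ∑ _p : (({γ // γ ∈ FF} → {nn // nn ∈ ss} → Bool) ×
              ({γ // γ ∈ FF} → {nn // nn ∈ ss} → Bool)), (ε / Cst) :=
          Finset.sum_le_sum fun γ _ => Finset.sum_le_sum fun p _ => hstep γ p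
      _ = (FF.card : ℝ) * Kr ^ 2 * (ε / Cst) := by
          rw [Finset.sum_const, Finset.sum_const, Finset.card_univ, Finset.card_univ]
          rw [nsmul_eq_mul, nsmul_eq_mul]
          rw [Fintype.card_coe, Fintype.card_prod]
          push_cast [hKr, hK]
          ring
  -- comparing sums over Comp
  have hGGsum : (μ (⋃ η ∈ Comp, R η)).toReal = ∑ η ∈ Comp, (μ (R η)).toReal :=
    mreal_biUnion μ Comp R hRmeas hRdisj
  have hT'sum : (μ ((a.phiMap φ) ⁻¹' (A i))).toReal = ∑ η ∈ Comp, (μ (Q η)).toReal := by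
    rw [hT']
    exact mreal_biUnion μ Comp Q hQmeas hQdisj
  have h6 : |(∑ η ∈ Comp, (μ (Q η)).toReal) - ∑ η ∈ Comp, (μ (R η)).toReal| ≤ Kr * (ε / Cst) := by
    calc |(∑ η ∈ Comp, (μ (Q η)).toReal) - ∑ η ∈ Comp, (μ (R η)).toReal|
        = |∑ η ∈ Comp, ((μ (Q η)).toReal - (μ (R η)).toReal)| := by rw [Finset.sum_sub_distrib]
      _ ≤ ∑ η ∈ Comp, |(μ (Q η)).toReal - (μ (R η)).toReal| := Finset.abs_sum_le_sum_abs _ _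
      _ ≤ ∑ _η ∈ Comp, (ε / Cst) := by
          refine Finset.sum_le_sum fun η _ => ?_
          have h := hent 1 h1FF η η
          rw [a.image_act_one, b.image_act_one, Set.inter_self, Set.inter_self] at h
          exact h
      _ = (Comp.card : ℝ) * (ε / Cst) := by rw [Finset.sum_const, nsmul_eq_mul]
      _ ≤ Kr * (ε / Cst) := by
          have hcard : (Comp.card : ℝ) ≤ Kr := by
            rw [hKr, hK]
            exact_mod_cast (Finset.card_filter_le _ _).trans (le_of_eq Finset.card_univ)
          exact mul_le_mul_of_nonneg_right hcard (le_of_lt hεC)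
  -- T vs the union over Comp
  have hsub1 : (b.phiMap ψ) ⁻¹' (A i) ⊆ (⋃ η ∈ Comp, R η) ∪ Bad := by
    intro x hx
    by_cases hxB : x ∈ Bad
    · exact Or.inr hxB
    · exact Or.inl ((hT x hxB).1 hx)
  have hsub2 : (⋃ η ∈ Comp, R η) ⊆ (b.phiMap ψ) ⁻¹' (A i) ∪ Bad := by
    intro x hx
    by_cases hxB : x ∈ Bad
    · exact Or.inr hxB
    · exact Or.inl ((hT x hxB).2 hx)
  have h5 : |(μ ((b.phiMap ψ) ⁻¹' (A i))).toReal - (μ (⋃ η ∈ Comp, R η)).toReal|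
      ≤ (μ Bad).toReal := by
    have h51 := mreal_union_le μ hsub1
    have h52 := mreal_union_le μ hsub2
    rw [abs_sub_le_iff]
    constructor <;> linarith
  -- conclusion
  have htri : |(μ ((a.phiMap φ) ⁻¹' (A i))).toReal - (μ ((b.phiMap ψ) ⁻¹' (A i))).toReal|
      ≤ Kr * (ε / Cst) + (μ Bad).toReal := by
    have habs1 : |(μ ((a.phiMap φ) ⁻¹' (A i))).toReal - (μ (⋃ η ∈ Comp, R η)).toReal|
        ≤ Kr * (ε / Cst) := by
      rw [← hT'sum, ← hGGsum] at h6
      exact h6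
    calc |(μ ((a.phiMap φ) ⁻¹' (A i))).toReal - (μ ((b.phiMap ψ) ⁻¹' (A i))).toReal|
        ≤ |(μ ((a.phiMap φ) ⁻¹' (A i))).toReal - (μ (⋃ η ∈ Comp, R η)).toReal|
          + |(μ (⋃ η ∈ Comp, R η)).toReal - (μ ((b.phiMap ψ) ⁻¹' (A i))).toReal| :=
          abs_sub_le _ _ _
      _ ≤ Kr * (ε / Cst) + (μ Bad).toReal := by
          rw [abs_sub_comm] at h5
          exact add_le_add habs1 h5
  refine htri.trans ?_
  have hfinal : Kr * (ε / Cst) + (FF.card : ℝ) * Kr ^ 2 * (ε / Cst) ≤ ε := by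
    have h1 : Kr * (ε / Cst) + (FF.card : ℝ) * Kr ^ 2 * (ε / Cst)
        = ((FF.card : ℝ) * Kr ^ 2 + Kr) * (ε / Cst) := by ring
    rw [h1]
    have h2 : (FF.card : ℝ) * Kr ^ 2 + Kr ≤ Cst := by
      rw [hCst]
      linarith
    have h3 : ((FF.card : ℝ) * Kr ^ 2 + Kr) * (ε / Cst) ≤ Cst * (ε / Cst) :=
      mul_le_mul_of_nonneg_right h2 (le_of_lt hεC)
    rw [mul_div_cancel₀] at h3
    · exact h3
    · exact ne_of_gt hCpos
  have := add_le_add_left hBadBound (Kr * (ε / Cst))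
  linarith

end WEAux4

section WEAux5

set_option linter.unusedSectionVars false
set_option maxHeartbeats 1000000

open MPAction
open scoped ENNReal

variable {Γ X : Type*} [Group Γ] [MeasurableSpace X]

/-- The generating set of `Cnk`. -/
def genSet (μ : MeasureTheory.Measure X) (e : ℕ → Γ) (a : MPAction Γ X μ) (n k : ℕ) :
    Set ((Fin n × Fin k × Fin k) → ℝ) :=
  { v | ∃ A : Fin k → Set X, MPAction.IsPartition A ∧
    ∀ (p : Fin n) (q r : Fin k), v (p, q, r) = (μ (a.act (e p.1) '' A q ∩ A r)).toReal }

theorem Cnk_eq_closure_genSet (μ : MeasureTheory.Measure X) (e : ℕ → Γ) (a : MPAction Γ X μ)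
    (n k : ℕ) : MPAction.Cnk e a n k = closure (genSet μ e a n k) := rfl

theorem genSet_nonempty (μ : MeasureTheory.Measure X) (e : ℕ → Γ) (a : MPAction Γ X μ)
    (n : ℕ) {k : ℕ} (hk : 0 < k) : (genSet μ e a n k).Nonempty := by
  obtain ⟨A, hA⟩ := MPAction.exists_isPartition (X := X) hk
  exact ⟨fun c => (μ (a.act (e c.1.1) '' A c.2.1 ∩ A c.2.2)).toReal, A, hA, fun p q r => rfl⟩

theorem genSet_empty_of_zero (μ : MeasureTheory.Measure X) [MeasureTheory.IsProbabilityMeasure μ]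
    (e : ℕ → Γ) (a : MPAction Γ X μ) (n : ℕ) : genSet μ e a n 0 = ∅ := by
  have : Nonempty X := MeasureTheory.nonempty_of_isProbabilityMeasure μ
  rw [Set.eq_empty_iff_forall_notMem]
  rintro v ⟨A, hA, -⟩
  exact MPAction.not_isPartition_zero A hA

theorem genSet_subset_cube (μ : MeasureTheory.Measure X) [MeasureTheory.IsProbabilityMeasure μ]
    (e : ℕ → Γ) (a : MPAction Γ X μ) (n k : ℕ) {v : (Fin n × Fin k × Fin k) → ℝ}
    (hv : v ∈ genSet μ e a n k) (c : Fin n × Fin k × Fin k) : v c ∈ Set.Icc (0:ℝ) 1 := by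
  obtain ⟨A, hA, hvA⟩ := hv
  obtain ⟨p, q, r⟩ := c
  rw [hvA p q r]
  exact ⟨ENNReal.toReal_nonneg, mreal_le_one μ _⟩

theorem Cnk_subset_cube (μ : MeasureTheory.Measure X) [MeasureTheory.IsProbabilityMeasure μ]
    (e : ℕ → Γ) (a : MPAction Γ X μ) (n k : ℕ) {v : (Fin n × Fin k × Fin k) → ℝ}
    (hv : v ∈ MPAction.Cnk e a n k) (c : Fin n × Fin k × Fin k) : v c ∈ Set.Icc (0:ℝ) 1 := by
  have hcl : IsClosed {w : (Fin n × Fin k × Fin k) → ℝ | ∀ c, w c ∈ Set.Icc (0:ℝ) 1} := by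
    have : {w : (Fin n × Fin k × Fin k) → ℝ | ∀ c, w c ∈ Set.Icc (0:ℝ) 1}
        = Set.pi Set.univ (fun _ => Set.Icc (0:ℝ) 1) := by
      ext w
      simp only [Set.mem_setOf_eq, Set.mem_univ_pi]
    rw [this]
    exact isClosed_set_pi fun _ _ => isClosed_Icc
  rw [Cnk_eq_closure_genSet μ] at hv
  have hsub : closure (genSet μ e a n k)
      ⊆ {w : (Fin n × Fin k × Fin k) → ℝ | ∀ c, w c ∈ Set.Icc (0:ℝ) 1} :=
    closure_minimal (fun w hw c => genSet_subset_cube μ e a n k hw c) hcl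
  exact hsub hv c

theorem Cnk_bounded (μ : MeasureTheory.Measure X) [MeasureTheory.IsProbabilityMeasure μ]
    (e : ℕ → Γ) (a : MPAction Γ X μ) (n k : ℕ) :
    Bornology.IsBounded (MPAction.Cnk e a n k) := by
  rw [Metric.isBounded_iff_subset_closedBall 0]
  refine ⟨1, fun v hv => ?_⟩
  rw [Metric.mem_closedBall, dist_pi_le_iff zero_le_one]
  intro c
  have h := Cnk_subset_cube μ e a n k hv c
  rw [Real.dist_eq]
  simp only [Pi.zero_apply, sub_zero]
  rw [abs_le]
  exact ⟨by linarith [h.1], h.2⟩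

/-- L2a: mutual `Close1` gives a Hausdorff distance bound. -/
theorem hausdorffDist_Cnk_le (μ : MeasureTheory.Measure X) (e : ℕ → Γ)
    (a b : MPAction Γ X μ) (n k : ℕ) {ε : ℝ} (hε : 0 ≤ ε)
    (hab : Close1 μ e a b n k ε) (hba : Close1 μ e b a n k ε) :
    Metric.hausdorffDist (MPAction.Cnk e a n k) (MPAction.Cnk e b n k) ≤ ε := by
  rw [Cnk_eq_closure_genSet μ, Cnk_eq_closure_genSet μ, Metric.hausdorffDist_closure]
  apply Metric.hausdorffDist_le_of_mem_dist hε
  · rintro v ⟨P, hP, hv⟩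
    obtain ⟨B, hB, hent⟩ := hab P hP
    refine ⟨fun c => (μ (b.act (e c.1.1) '' B c.2.1 ∩ B c.2.2)).toReal,
      ⟨B, hB, fun p q r => rfl⟩, ?_⟩
    rw [dist_pi_le_iff hε]
    rintro ⟨p, q, r⟩
    rw [Real.dist_eq, hv p q r]
    exact hent p q r
  · rintro v ⟨P, hP, hv⟩
    obtain ⟨B, hB, hent⟩ := hba P hP
    refine ⟨fun c => (μ (a.act (e c.1.1) '' B c.2.1 ∩ B c.2.2)).toReal,
      ⟨B, hB, fun p q r => rfl⟩, ?_⟩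
    rw [dist_pi_le_iff hε]
    rintro ⟨p, q, r⟩
    rw [Real.dist_eq, hv p q r]
    exact hent p q r

/-- L2b: a Hausdorff distance bound gives `Close1`. -/
theorem close1_of_hausdorffDist_lt (μ : MeasureTheory.Measure X)
    [MeasureTheory.IsProbabilityMeasure μ] (e : ℕ → Γ) (a b : MPAction Γ X μ) (n k : ℕ)
    {ε : ℝ} (hε : 0 < ε)
    (hd : Metric.hausdorffDist (MPAction.Cnk e a n k) (MPAction.Cnk e b n k) < ε) :
    Close1 μ e a b n k (2 * ε) := by
  intro P hP
  have hX : Nonempty X := MeasureTheory.nonempty_of_isProbabilityMeasure μ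
  have hk : 0 < k := by
    obtain ⟨i, -⟩ := hP.exists_mem (Classical.arbitrary X)
    exact i.pos
  set v : (Fin n × Fin k × Fin k) → ℝ :=
    fun c => (μ (a.act (e c.1.1) '' P c.2.1 ∩ P c.2.2)).toReal with hvdef
  have hv : v ∈ genSet μ e a n k := ⟨P, hP, fun p q r => rfl⟩
  have hvC : v ∈ MPAction.Cnk e a n k := by
    rw [Cnk_eq_closure_genSet μ]
    exact subset_closure hv
  have hane : (MPAction.Cnk e a n k).Nonempty := ⟨v, hvC⟩
  have hbne : (MPAction.Cnk e b n k).Nonempty := by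
    obtain ⟨w, hw⟩ := genSet_nonempty μ e b n hk
    exact ⟨w, by rw [Cnk_eq_closure_genSet μ]; exact subset_closure hw⟩
  have hfin : EMetric.hausdorffEdist (MPAction.Cnk e a n k) (MPAction.Cnk e b n k) ≠ ⊤ :=
    Metric.hausdorffEdist_ne_top_of_nonempty_of_bounded hane hbne
      (Cnk_bounded μ e a n k) (Cnk_bounded μ e b n k)
  obtain ⟨w, hw, hvw⟩ := Metric.exists_dist_lt_of_hausdorffDist_lt hvC hd hfin
  rw [Cnk_eq_closure_genSet μ] at hw
  obtain ⟨w', hw'gen, hww'⟩ := Metric.mem_closure_iff.1 hw ε hε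
  obtain ⟨B, hB, hwB⟩ := hw'gen
  refine ⟨B, hB, ?_⟩
  intro p q r
  have h1 : dist (v (p, q, r)) (w' (p, q, r)) ≤ dist v w' := dist_le_pi_dist v w' (p, q, r)
  have h2 : dist v w' ≤ dist v w + dist w w' := dist_triangle v w w'
  have h3 : |(μ (a.act (e p.1) '' P q ∩ P r)).toReal
      - (μ (b.act (e p.1) '' B q ∩ B r)).toReal| = dist (v (p, q, r)) (w' (p, q, r)) := by
    rw [Real.dist_eq, hwB p q r]
  rw [h3]
  have := h1.trans h2
  linarith

end WEAux5

section WEAux6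

set_option linter.unusedSectionVars false
set_option maxHeartbeats 1000000

open MPAction Filter
open scoped ENNReal

theorem twopow_eq (i : ℕ) : (2:ℝ) ^ (-(i:ℤ) - 1) = (1/2) ^ (i+1) := by
  rw [one_div, inv_pow, ← zpow_natCast (2:ℝ) (i+1), ← zpow_neg]
  congr 1
  push_cast
  ring

theorem twopow2_eq (n k : ℕ) : (2:ℝ) ^ (-(n:ℤ) - (k:ℤ)) = (1/2) ^ n * (1/2) ^ k := by
  rw [one_div, inv_pow, inv_pow, ← zpow_natCast (2:ℝ) n, ← zpow_natCast (2:ℝ) k,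
    ← zpow_neg, ← zpow_neg, ← zpow_add₀ (by norm_num : (2:ℝ) ≠ 0), sub_eq_add_neg]

theorem summable_base :
    Summable (fun nk : ℕ × ℕ => (2:ℝ) ^ (-(nk.1:ℤ) - (nk.2:ℤ))) := by
  have h : (fun nk : ℕ × ℕ => (2:ℝ) ^ (-(nk.1:ℤ) - (nk.2:ℤ)))
      = fun nk : ℕ × ℕ => (1/2:ℝ) ^ nk.1 * (1/2:ℝ) ^ nk.2 := by
    funext nk
    exact twopow2_eq nk.1 nk.2
  rw [h]
  exact Summable.mul_of_nonneg summable_geometric_two summable_geometric_two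
    (fun _ => by positivity) (fun _ => by positivity)

variable {Γ X : Type*} [Group Γ] [MeasurableSpace X]

theorem dWE_def (e : ℕ → Γ) {μ : MeasureTheory.Measure X} (a b : MPAction Γ X μ) :
    MPAction.dWE e a b = ∑' nk : ℕ × ℕ, (2 : ℝ) ^ (-(nk.1 : ℤ) - (nk.2 : ℤ)) *
      Metric.hausdorffDist (MPAction.Cnk e a nk.1 nk.2) (MPAction.Cnk e b nk.1 nk.2) := rfl

theorem hdCnk_le_one (μ : MeasureTheory.Measure X) [MeasureTheory.IsProbabilityMeasure μ]
    (e : ℕ → Γ) (a b : MPAction Γ X μ) (n k : ℕ) :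
    Metric.hausdorffDist (MPAction.Cnk e a n k) (MPAction.Cnk e b n k) ≤ 1 := by
  rcases Nat.eq_zero_or_pos k with hk | hk
  · subst hk
    rw [Cnk_eq_closure_genSet μ, Cnk_eq_closure_genSet μ, genSet_empty_of_zero μ,
      genSet_empty_of_zero μ, closure_empty, Metric.hausdorffDist_empty]
    exact zero_le_one
  · apply Metric.hausdorffDist_le_of_mem_dist zero_le_one
    · intro v hv
      obtain ⟨w, hw⟩ := genSet_nonempty μ e b n hk
      have hwC : w ∈ MPAction.Cnk e b n k := by
        rw [Cnk_eq_closure_genSet μ]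
        exact subset_closure hw
      refine ⟨w, hwC, ?_⟩
      rw [dist_pi_le_iff zero_le_one]
      intro c
      have h1 := Cnk_subset_cube μ e a n k hv c
      have h2 := Cnk_subset_cube μ e b n k hwC c
      rw [Real.dist_eq, abs_le]
      exact ⟨by linarith [h1.1, h2.2], by linarith [h1.2, h2.1]⟩
    · intro v hv
      obtain ⟨w, hw⟩ := genSet_nonempty μ e a n hk
      have hwC : w ∈ MPAction.Cnk e a n k := by
        rw [Cnk_eq_closure_genSet μ]
        exact subset_closure hw
      refine ⟨w, hwC, ?_⟩
      rw [dist_pi_le_iff zero_le_one]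
      intro c
      have h1 := Cnk_subset_cube μ e b n k hv c
      have h2 := Cnk_subset_cube μ e a n k hwC c
      rw [Real.dist_eq, abs_le]
      exact ⟨by linarith [h1.1, h2.2], by linarith [h1.2, h2.1]⟩

theorem summable_dWE_terms (μ : MeasureTheory.Measure X)
    [MeasureTheory.IsProbabilityMeasure μ] (e : ℕ → Γ) (a b : MPAction Γ X μ) :
    Summable (fun nk : ℕ × ℕ => (2:ℝ) ^ (-(nk.1:ℤ) - (nk.2:ℤ)) *
      Metric.hausdorffDist (MPAction.Cnk e a nk.1 nk.2) (MPAction.Cnk e b nk.1 nk.2)) := by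
  refine Summable.of_nonneg_of_le
    (fun nk => mul_nonneg (by positivity) Metric.hausdorffDist_nonneg)
    (fun nk => ?_) summable_base
  calc (2:ℝ) ^ (-(nk.1:ℤ) - (nk.2:ℤ)) *
      Metric.hausdorffDist (MPAction.Cnk e a nk.1 nk.2) (MPAction.Cnk e b nk.1 nk.2)
      ≤ (2:ℝ) ^ (-(nk.1:ℤ) - (nk.2:ℤ)) * 1 :=
        mul_le_mul_of_nonneg_left (hdCnk_le_one μ e a b nk.1 nk.2) (by positivity)
    _ = (2:ℝ) ^ (-(nk.1:ℤ) - (nk.2:ℤ)) := mul_one _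

/-- L1: convergence of `dWE` is equivalent to termwise convergence of Hausdorff distances. -/
theorem dWE_tendsto_iff (μ : MeasureTheory.Measure X) [MeasureTheory.IsProbabilityMeasure μ]
    (e : ℕ → Γ) (a : ℕ → MPAction Γ X μ) (b : MPAction Γ X μ) :
    Tendsto (fun m => MPAction.dWE e (a m) b) atTop (nhds 0) ↔
    ∀ n k : ℕ, Tendsto (fun m => Metric.hausdorffDist (MPAction.Cnk e (a m) n k)
      (MPAction.Cnk e b n k)) atTop (nhds 0) := by
  constructor
  · intro h n k
    have hc : (0:ℝ) < (2:ℝ) ^ (-(n:ℤ) - (k:ℤ)) := by positivity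
    have key : Tendsto (fun m => ((2:ℝ) ^ (-(n:ℤ) - (k:ℤ)))⁻¹ * MPAction.dWE e (a m) b)
        atTop (nhds 0) := by
      simpa using h.const_mul ((2:ℝ) ^ (-(n:ℤ) - (k:ℤ)))⁻¹
    refine squeeze_zero (fun m => Metric.hausdorffDist_nonneg) (fun m => ?_) key
    have h1 : (2:ℝ) ^ (-(n:ℤ) - (k:ℤ)) *
        Metric.hausdorffDist (MPAction.Cnk e (a m) n k) (MPAction.Cnk e b n k)
        ≤ MPAction.dWE e (a m) b :=
      Summable.le_tsum (summable_dWE_terms μ e (a m) b) (n, k)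
        (fun j _ => mul_nonneg (by positivity) Metric.hausdorffDist_nonneg)
    have h2 := mul_le_mul_of_nonneg_left h1 (inv_nonneg.2 hc.le)
    rwa [← mul_assoc, inv_mul_cancel₀ (ne_of_gt hc), one_mul] at h2
  · intro h
    have hptwise : ∀ nk : ℕ × ℕ, Tendsto (fun m => (2:ℝ) ^ (-(nk.1:ℤ) - (nk.2:ℤ)) *
        Metric.hausdorffDist (MPAction.Cnk e (a m) nk.1 nk.2) (MPAction.Cnk e b nk.1 nk.2))
        atTop (nhds ((fun _ : ℕ × ℕ => (0:ℝ)) nk)) := by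
      intro nk
      simpa using (h nk.1 nk.2).const_mul ((2:ℝ) ^ (-(nk.1:ℤ) - (nk.2:ℤ)))
    have hbound : ∀ᶠ (m : ℕ) in atTop, ∀ nk : ℕ × ℕ,
        ‖(2:ℝ) ^ (-(nk.1:ℤ) - (nk.2:ℤ)) *
          Metric.hausdorffDist (MPAction.Cnk e (a m) nk.1 nk.2) (MPAction.Cnk e b nk.1 nk.2)‖
          ≤ (2:ℝ) ^ (-(nk.1:ℤ) - (nk.2:ℤ)) := by
      filter_upwards with m nk
      rw [Real.norm_eq_abs,
        abs_of_nonneg (mul_nonneg (by positivity) Metric.hausdorffDist_nonneg)]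
      calc (2:ℝ) ^ (-(nk.1:ℤ) - (nk.2:ℤ)) *
          Metric.hausdorffDist (MPAction.Cnk e (a m) nk.1 nk.2) (MPAction.Cnk e b nk.1 nk.2)
          ≤ (2:ℝ) ^ (-(nk.1:ℤ) - (nk.2:ℤ)) * 1 :=
            mul_le_mul_of_nonneg_left (hdCnk_le_one μ e (a m) b nk.1 nk.2) (by positivity)
        _ = (2:ℝ) ^ (-(nk.1:ℤ) - (nk.2:ℤ)) := mul_one _
    have hlim := tendsto_tsum_of_dominated_convergence summable_base hptwise hbound
    simpa [tsum_zero, dWE_def] using hlim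

/-! ### `deltaEnum` estimates -/

theorem abs_mreal_sub_le_two {M : Type*} [MeasurableSpace M]
    (m m' : MeasureTheory.Measure M) [MeasureTheory.IsProbabilityMeasure m]
    [MeasureTheory.IsProbabilityMeasure m'] (S : Set M) :
    |(m S).toReal - (m' S).toReal| ≤ 2 := by
  have h1 := mreal_le_one m S
  have h2 := mreal_le_one m' S
  have h3 : (0:ℝ) ≤ (m S).toReal := ENNReal.toReal_nonneg
  have h4 : (0:ℝ) ≤ (m' S).toReal := ENNReal.toReal_nonneg
  rw [abs_le]
  constructor <;> linarith

theorem deltaEnum_def' {M : Type*} [MeasurableSpace M] (A : ℕ → Set M)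
    (m m' : MeasureTheory.Measure M) : deltaEnum A m m'
      = ∑' i : ℕ, (2:ℝ) ^ (-(i:ℤ) - 1) * |(m (A i)).toReal - (m' (A i)).toReal| := rfl

theorem summable_delta_terms {M : Type*} [MeasurableSpace M] (A : ℕ → Set M)
    (m m' : MeasureTheory.Measure M) [MeasureTheory.IsProbabilityMeasure m]
    [MeasureTheory.IsProbabilityMeasure m'] :
    Summable (fun i : ℕ => (2:ℝ) ^ (-(i:ℤ) - 1) * |(m (A i)).toReal - (m' (A i)).toReal|) := by
  refine Summable.of_nonneg_of_le (fun i => mul_nonneg (by positivity) (abs_nonneg _))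
    (fun i => ?_) summable_geometric_two
  rw [twopow_eq]
  calc (1/2:ℝ) ^ (i+1) * |(m (A i)).toReal - (m' (A i)).toReal|
      ≤ (1/2:ℝ) ^ (i+1) * 2 :=
        mul_le_mul_of_nonneg_left (abs_mreal_sub_le_two m m' (A i)) (by positivity)
    _ = (1/2:ℝ) ^ i := by rw [pow_succ]; ring

theorem deltaEnum_nonneg {M : Type*} [MeasurableSpace M] (A : ℕ → Set M)
    (m m' : MeasureTheory.Measure M) : 0 ≤ deltaEnum A m m' :=
  tsum_nonneg fun i => mul_nonneg (by positivity) (abs_nonneg _)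

theorem deltaEnum_le {M : Type*} [MeasurableSpace M] (A : ℕ → Set M)
    (m m' : MeasureTheory.Measure M) [MeasureTheory.IsProbabilityMeasure m]
    [MeasureTheory.IsProbabilityMeasure m'] (N : ℕ) {ε' : ℝ} (hε' : 0 ≤ ε')
    (hd : ∀ i < N, |(m (A i)).toReal - (m' (A i)).toReal| ≤ ε') :
    deltaEnum A m m' ≤ ε' + (1/2:ℝ)^N * 2 := by
  have hsum := summable_delta_terms A m m'
  rw [deltaEnum_def', ← Summable.sum_add_tsum_nat_add N hsum]
  have hhead : ∑ i ∈ Finset.range N,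
      (2:ℝ) ^ (-(i:ℤ) - 1) * |(m (A i)).toReal - (m' (A i)).toReal| ≤ ε' := by
    calc ∑ i ∈ Finset.range N, (2:ℝ) ^ (-(i:ℤ) - 1) * |(m (A i)).toReal - (m' (A i)).toReal|
        ≤ ∑ i ∈ Finset.range N, (1/2:ℝ)^(i+1) * ε' := by
          refine Finset.sum_le_sum fun i hi => ?_
          rw [twopow_eq]
          exact mul_le_mul_of_nonneg_left (hd i (Finset.mem_range.1 hi)) (by positivity)
      _ = (∑ i ∈ Finset.range N, (1/2:ℝ)^(i+1)) * ε' := by rw [Finset.sum_mul]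
      _ ≤ 1 * ε' := by
          refine mul_le_mul_of_nonneg_right ?_ hε'
          have h1 : ∑ i ∈ Finset.range N, (1/2:ℝ)^(i+1)
              = (1/2) * ∑ i ∈ Finset.range N, (1/2:ℝ)^i := by
            rw [Finset.mul_sum]
            exact Finset.sum_congr rfl fun i _ => by ring
          rw [h1]
          have h2 := sum_geometric_two_le N
          linarith
      _ = ε' := one_mul _
  have htail : ∑' i : ℕ,
      (2:ℝ) ^ (-((i + N : ℕ):ℤ) - 1) * |(m (A (i + N))).toReal - (m' (A (i + N))).toReal|
      ≤ (1/2:ℝ)^N * 2 := by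
    have hb : ∀ i : ℕ,
        (2:ℝ) ^ (-((i + N : ℕ):ℤ) - 1) * |(m (A (i + N))).toReal - (m' (A (i + N))).toReal|
        ≤ (1/2:ℝ)^N * (1/2:ℝ)^i := by
      intro i
      rw [twopow_eq]
      calc (1/2:ℝ) ^ (i + N + 1) * |(m (A (i + N))).toReal - (m' (A (i + N))).toReal|
          ≤ (1/2:ℝ) ^ (i + N + 1) * 2 :=
            mul_le_mul_of_nonneg_left (abs_mreal_sub_le_two m m' (A (i + N))) (by positivity)
        _ = (1/2:ℝ) ^ (i + N) := by rw [pow_succ]; ring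
        _ = (1/2:ℝ)^N * (1/2:ℝ)^i := by rw [pow_add]; ring
    calc ∑' i : ℕ, (2:ℝ) ^ (-((i + N : ℕ):ℤ) - 1) *
          |(m (A (i + N))).toReal - (m' (A (i + N))).toReal|
        ≤ ∑' i : ℕ, (1/2:ℝ)^N * (1/2:ℝ)^i :=
          Summable.tsum_le_tsum hb ((summable_nat_add_iff N).2 hsum)
            (Summable.mul_left _ summable_geometric_two)
      _ = (1/2:ℝ)^N * ∑' i : ℕ, (1/2:ℝ)^i := tsum_mul_left
      _ = (1/2:ℝ)^N * 2 := by rw [tsum_geometric_two]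
  linarith

theorem abs_le_of_deltaEnum_lt {M : Type*} [MeasurableSpace M] (A : ℕ → Set M)
    (m m' : MeasureTheory.Measure M) [MeasureTheory.IsProbabilityMeasure m]
    [MeasureTheory.IsProbabilityMeasure m'] {i N : ℕ} (hiN : i < N) {δ' : ℝ}
    (h : deltaEnum A m m' < δ') :
    |(m (A i)).toReal - (m' (A i)).toReal| ≤ (2:ℝ)^N * δ' := by
  have hsum := summable_delta_terms A m m'
  have h1 : (2:ℝ) ^ (-(i:ℤ) - 1) * |(m (A i)).toReal - (m' (A i)).toReal| ≤ deltaEnum A m m' :=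
    Summable.le_tsum hsum i (fun j _ => mul_nonneg (by positivity) (abs_nonneg _))
  have h2 : (1/2:ℝ)^(i+1) * |(m (A i)).toReal - (m' (A i)).toReal| < δ' := by
    rw [← twopow_eq]
    linarith
  have e1 : ((1:ℝ)/2)^(i+1) = ((2:ℝ)^(i+1))⁻¹ := by rw [one_div, inv_pow]
  rw [e1] at h2
  have hppos : (0:ℝ) < (2:ℝ)^(i+1) := by positivity
  have h3 := mul_lt_mul_of_pos_left h2 hppos
  rw [← mul_assoc, mul_inv_cancel₀ (ne_of_gt hppos), one_mul] at h3
  have h4 : (2:ℝ)^(i+1) ≤ (2:ℝ)^N := by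
    apply pow_le_pow_right₀ (by norm_num)
    omega
  have hδ : 0 ≤ δ' := le_trans (deltaEnum_nonneg A m m') h.le
  have h5 : (2:ℝ)^(i+1) * δ' ≤ (2:ℝ)^N * δ' := mul_le_mul_of_nonneg_right h4 hδ
  linarith

end WEAux6

section WEAux7

set_option linter.unusedSectionVars false
set_option maxHeartbeats 1000000

open MPAction Filter
open scoped ENNReal

variable {Γ X : Type*} [Group Γ] [Countable Γ] [MeasurableSpace X]

theorem L3a (μ : MeasureTheory.Measure X) [MeasureTheory.IsProbabilityMeasure μ]
    (A : ℕ → Set (Γ → Cantor)) (a : ℕ → MPAction Γ X μ) (b : MPAction Γ X μ)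
    (h : ∀ N : ℕ, ∀ ε : ℝ, 0 < ε → ∀ᶠ m in atTop,
      CloseE μ A (a m) b N ε ∧ CloseE μ A b (a m) N ε) :
    HausTendsto (deltaEnum A) (fun m => (a m).ESet Cantor) (b.ESet Cantor) := by
  intro ε hε
  obtain ⟨N, hN⟩ : ∃ N : ℕ, (1/2:ℝ)^N * 2 < ε/2 := by
    obtain ⟨N, hN⟩ := exists_pow_lt_of_lt_one (show (0:ℝ) < ε/4 by linarith)
      (by norm_num : (1/2:ℝ) < 1)
    exact ⟨N, by linarith⟩
  have hev := h N (ε/4) (by linarith)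
  rw [eventually_atTop] at hev
  obtain ⟨M, hM⟩ := hev
  refine ⟨M, fun m hm => ?_⟩
  obtain ⟨h1, h2⟩ := hM m hm
  constructor
  · rintro mm ⟨φ, hφ, rfl⟩
    obtain ⟨ψ, hψ, hd⟩ := h1 φ hφ
    refine ⟨μ.map (b.phiMap ψ), ⟨ψ, hψ, rfl⟩, ?_⟩
    haveI : MeasureTheory.IsProbabilityMeasure (μ.map ((a m).phiMap φ)) :=
      MeasureTheory.Measure.isProbabilityMeasure_map ((a m).measurable_phiMap hφ).aemeasurable
    haveI : MeasureTheory.IsProbabilityMeasure (μ.map (b.phiMap ψ)) :=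
      MeasureTheory.Measure.isProbabilityMeasure_map (b.measurable_phiMap hψ).aemeasurable
    have hle := deltaEnum_le A (μ.map ((a m).phiMap φ)) (μ.map (b.phiMap ψ)) N
      (by linarith : (0:ℝ) ≤ ε/4) hd
    linarith
  · rintro mm ⟨φ, hφ, rfl⟩
    obtain ⟨ψ, hψ, hd⟩ := h2 φ hφ
    refine ⟨μ.map ((a m).phiMap ψ), ⟨ψ, hψ, rfl⟩, ?_⟩
    haveI : MeasureTheory.IsProbabilityMeasure (μ.map (b.phiMap φ)) :=
      MeasureTheory.Measure.isProbabilityMeasure_map (b.measurable_phiMap hφ).aemeasurable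
    haveI : MeasureTheory.IsProbabilityMeasure (μ.map ((a m).phiMap ψ)) :=
      MeasureTheory.Measure.isProbabilityMeasure_map ((a m).measurable_phiMap hψ).aemeasurable
    have hd' : ∀ i < N, |((μ.map ((a m).phiMap ψ)) (A i)).toReal
        - ((μ.map (b.phiMap φ)) (A i)).toReal| ≤ ε/4 := by
      intro i hi
      rw [abs_sub_comm]
      exact hd i hi
    have hle := deltaEnum_le A (μ.map ((a m).phiMap ψ)) (μ.map (b.phiMap φ)) N
      (by linarith : (0:ℝ) ≤ ε/4) hd'
    linarith

theorem L3b (μ : MeasureTheory.Measure X) [MeasureTheory.IsProbabilityMeasure μ]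
    (A : ℕ → Set (Γ → Cantor)) (a : ℕ → MPAction Γ X μ) (b : MPAction Γ X μ)
    (H : HausTendsto (deltaEnum A) (fun m => (a m).ESet Cantor) (b.ESet Cantor)) :
    ∀ N : ℕ, ∀ ε : ℝ, 0 < ε → ∀ᶠ m in atTop,
      CloseE μ A (a m) b N ε ∧ CloseE μ A b (a m) N ε := by
  intro N ε hε
  have hδ : (0:ℝ) < ε / (2:ℝ)^N := by positivity
  obtain ⟨M, hM⟩ := H (ε / (2:ℝ)^N) hδ
  rw [eventually_atTop]
  refine ⟨M, fun m hm => ⟨?_, ?_⟩⟩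
  · intro φ hφ
    obtain ⟨mm', hmm', hd⟩ := (hM m hm).1 (μ.map ((a m).phiMap φ)) ⟨φ, hφ, rfl⟩
    obtain ⟨ψ, hψ, rfl⟩ := hmm'
    refine ⟨ψ, hψ, fun i hi => ?_⟩
    haveI : MeasureTheory.IsProbabilityMeasure (μ.map ((a m).phiMap φ)) :=
      MeasureTheory.Measure.isProbabilityMeasure_map ((a m).measurable_phiMap hφ).aemeasurable
    haveI : MeasureTheory.IsProbabilityMeasure (μ.map (b.phiMap ψ)) :=
      MeasureTheory.Measure.isProbabilityMeasure_map (b.measurable_phiMap hψ).aemeasurable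
    have h1 := abs_le_of_deltaEnum_lt A (μ.map ((a m).phiMap φ)) (μ.map (b.phiMap ψ)) hi hd
    have h2 : (2:ℝ)^N * (ε / (2:ℝ)^N) = ε := by field_simp
    linarith
  · intro φ hφ
    obtain ⟨mm, hmm, hd⟩ := (hM m hm).2 (μ.map (b.phiMap φ)) ⟨φ, hφ, rfl⟩
    obtain ⟨ψ, hψ, rfl⟩ := hmm
    refine ⟨ψ, hψ, fun i hi => ?_⟩
    haveI : MeasureTheory.IsProbabilityMeasure (μ.map ((a m).phiMap ψ)) :=
      MeasureTheory.Measure.isProbabilityMeasure_map ((a m).measurable_phiMap hψ).aemeasurable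
    haveI : MeasureTheory.IsProbabilityMeasure (μ.map (b.phiMap φ)) :=
      MeasureTheory.Measure.isProbabilityMeasure_map (b.measurable_phiMap hφ).aemeasurable
    have h1 := abs_le_of_deltaEnum_lt A (μ.map ((a m).phiMap ψ)) (μ.map (b.phiMap φ)) hi hd
    have h2 : (2:ℝ)^N * (ε / (2:ℝ)^N) = ε := by field_simp
    rw [abs_sub_comm] at h1
    linarith

end WEAux7

/-- `d(a_n, a) → 0` if and only if the closures of `E(a_n,K)` converge to the
closure of `E(a,K)` in the Hausdorff metric topology on the hyperspace of compact subsets of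
`M_s(K^Γ)` (expressed via the compatible metric `δ_K` built from an enumeration of the clopen
cylinder sets of `K^Γ`).  In other words, the topology `τ₁` induced by the metric `d` on
`A_∼(Γ,X,μ)` coincides with the topology `τ₂` induced by `a ↦ closure (E(a,K))`. -/
theorem dWE_tendsto_iff_ESet_hausdorff_tendsto
    (Γ : Type) [Group Γ] [Countable Γ]
    (X : Type) [MeasurableSpace X] [StandardBorelSpace X]
    (μ : Measure X) [IsProbabilityMeasure μ] [NullSingletonClass μ]
    (e : ℕ → Γ) (he : Function.Surjective e)
    (A : ℕ → Set (Γ → Cantor)) (hA : Enumerates A (KCyl Γ))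
    (a : ℕ → MPAction Γ X μ) (b : MPAction Γ X μ) :
    Filter.Tendsto (fun n => MPAction.dWE e (a n) b) Filter.atTop (nhds 0) ↔
      HausTendsto (deltaEnum A) (fun n => (a n).ESet Cantor) (b.ESet Cantor) := by
  constructor
  · intro hd
    apply L3a μ A a b
    intro N ε hε
    obtain ⟨n, k, ε₁, hε₁, him⟩ := lemA μ e he A hA N ε hε
    have hDnk := (dWE_tendsto_iff μ e a b).1 hd n k
    have hev : ∀ᶠ m in Filter.atTop, Metric.hausdorffDist (MPAction.Cnk e (a m) n k)
        (MPAction.Cnk e b n k) < ε₁ / 2 := by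
      obtain ⟨M, hM⟩ := Metric.tendsto_atTop.1 hDnk (ε₁ / 2) (by linarith)
      rw [Filter.eventually_atTop]
      refine ⟨M, fun m hm => ?_⟩
      have h := hM m hm
      rwa [Real.dist_eq, sub_zero, abs_of_nonneg Metric.hausdorffDist_nonneg] at h
    filter_upwards [hev] with m hm
    have hc1 : Close1 μ e (a m) b n k ε₁ := by
      have h := close1_of_hausdorffDist_lt μ e (a m) b n k (show (0:ℝ) < ε₁ / 2 by linarith) hm
      have h2 : 2 * (ε₁ / 2) = ε₁ := by ring
      rwa [h2] at h
    have hc2 : Close1 μ e b (a m) n k ε₁ := by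
      rw [Metric.hausdorffDist_comm] at hm
      have h := close1_of_hausdorffDist_lt μ e b (a m) n k (show (0:ℝ) < ε₁ / 2 by linarith) hm
      have h2 : 2 * (ε₁ / 2) = ε₁ := by ring
      rwa [h2] at h
    exact ⟨him (a m) b hc1, him b (a m) hc2⟩
  · intro hH
    apply (dWE_tendsto_iff μ e a b).2
    intro n k
    rw [Metric.tendsto_atTop]
    intro ε hε
    obtain ⟨N, him⟩ := lemB μ e A hA n k (ε / 2) (by linarith)
    have hev := L3b μ A a b hH N (ε / 2) (by linarith)
    rw [Filter.eventually_atTop] at hev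
    obtain ⟨M, hM⟩ := hev
    refine ⟨M, fun m hm => ?_⟩
    obtain ⟨h1, h2⟩ := hM m hm
    have hD := hausdorffDist_Cnk_le μ e (a m) b n k (by linarith : (0:ℝ) ≤ ε / 2)
      (him (a m) b h1) (him b (a m) h2)
    rw [Real.dist_eq, sub_zero, abs_of_nonneg Metric.hausdorffDist_nonneg]
    linarith
end

section
/- Let Γ be a countable discrete group, (X,μ) a standard probability space, and K the Cantor set. For every ε > 0 there exists k ∈ ℕ such that for every measure-preserving action a of Γ on (X,μ) and every measurable φ: X → K there is a measurable ψ: X → K whose range has size at most k and such that δ_K((Φ^{φ,a})_*μ, (Φ^{ψ,a})_*μ) < ε. The integer k depends only on ε, not on a or φ. -/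
open MeasureTheory Filter Topology Set

/-- For every `ε > 0` there is `k ∈ ℕ`, depending only on `ε` (and the fixed
enumeration of the clopen cylinder sets defining the metric `δ_K`), such that for every
measure-preserving action `a` of `Γ` on `(X,μ)` and every measurable `φ : X → K` there is a
measurable `ψ : X → K` whose range has at most `k` elements with
`δ_K((Φ^{φ,a})_*μ, (Φ^{ψ,a})_*μ) < ε`. -/
theorem finite_range_approximation
    (Γ : Type) [Group Γ] [Countable Γ]
    (X : Type) [MeasurableSpace X] [StandardBorelSpace X]
    (μ : Measure X) [IsProbabilityMeasure μ] [NullSingletonClass μ]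
    (A : ℕ → Set (Γ → Cantor)) (hA : Enumerates A (KCyl Γ))
    (ε : ℝ) (hε : 0 < ε) :
    ∃ k : ℕ, ∀ (a : MPAction Γ X μ) (φ : X → Cantor), Measurable φ →
      ∃ ψ : X → Cantor, Measurable ψ ∧ (Set.range ψ).Finite ∧ (Set.range ψ).ncard ≤ k ∧
        deltaEnum A (μ.map (a.phiMap φ)) (μ.map (a.phiMap ψ)) < ε := by
  classical
  -- every cylinder set is determined by finitely many coordinates
  have det : ∀ C ∈ KCyl Γ, ∃ n : ℕ, ∀ f g : Γ → Cantor,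
      (∀ γ m, m < n → f γ m = g γ m) → (f ∈ C ↔ g ∈ C) := by
    rintro C ⟨F, B, hB, rfl⟩
    have hB' : ∀ γ : Γ, ∃ (s : Finset ℕ) (σ : ℕ → Bool),
        (if γ ∈ F then B γ else Set.univ) = {x : Cantor | ∀ m ∈ s, x m = σ m} := by
      intro γ
      by_cases h : γ ∈ F
      · simpa [h, cantorBasic] using hB γ h
      · exact ⟨∅, fun _ => false, by simp [h]⟩
    choose s σ hs using hB'
    refine ⟨F.sup (fun γ => (s γ).sup id) + 1, ?_⟩
    intro f g hfg
    have key : ∀ γ ∈ F, (f γ ∈ B γ ↔ g γ ∈ B γ) := by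
      intro γ hγ
      have hBγ : B γ = {x : Cantor | ∀ m ∈ s γ, x m = σ γ m} := by
        simpa [hγ] using hs γ
      have hag : ∀ m ∈ s γ, f γ m = g γ m := by
        intro m hm
        refine hfg γ m ?_
        have h1 : m ≤ (s γ).sup id := Finset.le_sup (f := id) hm
        have h2 : (s γ).sup id ≤ F.sup (fun γ => (s γ).sup id) := Finset.le_sup (f := fun γ => (s γ).sup id) hγ
        omega
      rw [hBγ]
      constructor
      · intro h m hm; rw [← hag m hm]; exact h m hm
      · intro h m hm; rw [hag m hm]; exact h m hm
    constructor
    · intro h γ hγ; exact (key γ hγ).1 (h γ hγ)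
    · intro h γ hγ; exact (key γ hγ).2 (h γ hγ)
  -- cylinder sets are measurable
  have measA : ∀ C ∈ KCyl Γ, MeasurableSet C := by
    rintro C ⟨F, B, hB, rfl⟩
    have hE : {f : Γ → Cantor | ∀ γ ∈ F, f γ ∈ B γ}
        = ⋂ γ ∈ F, (fun f : Γ → Cantor => f γ) ⁻¹' (B γ) := by
      ext f; simp
    rw [hE]
    refine MeasurableSet.biInter F.countable_toSet (fun γ hγ => ?_)
    obtain ⟨s, σ, hBγ⟩ := hB γ hγ
    have hBm : MeasurableSet (B γ) := by
      rw [hBγ]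
      have : {x : Cantor | ∀ m ∈ s, x m = σ m}
          = ⋂ m ∈ s, (fun x : Cantor => x m) ⁻¹' {σ m} := by
        ext x; simp
      rw [this]
      exact MeasurableSet.biInter s.countable_toSet
        (fun m _ => (measurable_pi_apply m) (measurableSet_singleton _))
    exact (measurable_pi_apply γ) hBm
  -- choose N with (1/2)^N < ε
  obtain ⟨N, hN⟩ := exists_pow_lt_of_lt_one hε (by norm_num : (1:ℝ)/2 < 1)
  choose nn hnn using fun i : ℕ => det (A i) (hA.1 i)
  set n : ℕ := (Finset.range N).sup nn with hn
  refine ⟨2 ^ n, ?_⟩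
  intro a φ hφ
  set ψ : X → Cantor := fun x m => if m < n then φ x m else false with hψdef
  have hψ : Measurable ψ := by
    refine measurable_pi_lambda _ (fun m => ?_)
    by_cases h : m < n
    · simpa [ψ, h, Function.comp_def] using (measurable_pi_apply m).comp hφ
    · simpa [ψ, h] using measurable_const
  -- range of ψ is small
  set S : Set Cantor := {g | ∀ m, n ≤ m → g m = false} with hS
  have hrS : Set.range ψ ⊆ S := by
    rintro _ ⟨x, rfl⟩ m hm
    simp [ψ, Nat.not_lt.2 hm]
  set e : Cantor → (Fin n → Bool) := fun g i => g i with he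
  have hinj : Set.InjOn e S := by
    intro g hg g' hg' h
    funext m
    by_cases hm : m < n
    · exact congrFun h ⟨m, hm⟩
    · rw [hg m (Nat.le_of_not_lt hm), hg' m (Nat.le_of_not_lt hm)]
  have hSfin : S.Finite := Set.Finite.of_finite_image (Set.toFinite _) hinj
  have hrfin : (Set.range ψ).Finite := hSfin.subset hrS
  have hcard : (Set.range ψ).ncard ≤ 2 ^ n := by
    have h1 : (Set.range ψ).ncard ≤ S.ncard := Set.ncard_le_ncard hrS hSfin
    have h2 : S.ncard = (e '' S).ncard := (Set.ncard_image_of_injOn hinj).symm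
    have h3 : (e '' S).ncard ≤ (Set.univ : Set (Fin n → Bool)).ncard :=
      Set.ncard_le_ncard (Set.subset_univ _) Set.finite_univ
    have h4 : (Set.univ : Set (Fin n → Bool)).ncard = 2 ^ n := by
      rw [Set.ncard_univ, Nat.card_eq_fintype_card]
      simp
    omega
  refine ⟨ψ, hψ, hrfin, hcard, ?_⟩
  -- measurability of the maps
  have hphiφ : Measurable (a.phiMap φ) :=
    measurable_pi_lambda _ (fun γ => hφ.comp (a.measurePreserving_act γ⁻¹).measurable)
  have hphiψ : Measurable (a.phiMap ψ) :=
    measurable_pi_lambda _ (fun γ => hψ.comp (a.measurePreserving_act γ⁻¹).measurable)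
  set m1 := μ.map (a.phiMap φ) with hm1
  set m2 := μ.map (a.phiMap ψ) with hm2
  have hprob1 : IsProbabilityMeasure m1 := Measure.isProbabilityMeasure_map hphiφ.aemeasurable
  have hprob2 : IsProbabilityMeasure m2 := Measure.isProbabilityMeasure_map hphiψ.aemeasurable
  -- the first N terms vanish
  have hmeasEq : ∀ i < N, m1 (A i) = m2 (A i) := by
    intro i hi
    rw [hm1, hm2, Measure.map_apply hphiφ (measA _ (hA.1 i)),
      Measure.map_apply hphiψ (measA _ (hA.1 i))]
    congr 1
    ext x
    simp only [Set.mem_preimage]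
    refine hnn i _ _ ?_
    intro γ m hm
    have hmn : m < n := lt_of_lt_of_le hm (Finset.le_sup (Finset.mem_range.2 hi))
    simp [MPAction.phiMap, ψ, hmn]
  set t : ℕ → ℝ := fun i => (2 : ℝ) ^ (-(i : ℤ) - 1) * |(m1 (A i)).toReal - (m2 (A i)).toReal|
    with ht_def
  have hpow : ∀ i : ℕ, (2:ℝ) ^ (-(i : ℤ) - 1) = ((1:ℝ)/2) ^ (i + 1) := by
    intro i
    rw [one_div, inv_pow, ← zpow_natCast, ← zpow_neg]
    congr 1
    push_cast
    ring
  have htle : ∀ i, t i ≤ ((1:ℝ)/2) ^ (i + 1) := by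
    intro i
    have hb1 : (m1 (A i)).toReal ≤ 1 := by
      have := prob_le_one (μ := m1) (s := A i)
      exact ENNReal.toReal_le_of_le_ofReal one_pos.le (by simpa using this)
    have hb2 : (m2 (A i)).toReal ≤ 1 := by
      have := prob_le_one (μ := m2) (s := A i)
      exact ENNReal.toReal_le_of_le_ofReal one_pos.le (by simpa using this)
    have hnn1 : 0 ≤ (m1 (A i)).toReal := ENNReal.toReal_nonneg
    have hnn2 : 0 ≤ (m2 (A i)).toReal := ENNReal.toReal_nonneg
    have habs : |(m1 (A i)).toReal - (m2 (A i)).toReal| ≤ 1 :=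
      abs_sub_le_iff.2 ⟨by linarith, by linarith⟩
    calc t i ≤ (2 : ℝ) ^ (-(i : ℤ) - 1) * 1 := by
          exact mul_le_mul_of_nonneg_left habs (by positivity)
      _ = ((1:ℝ)/2) ^ (i + 1) := by rw [mul_one, hpow]
  have htnonneg : ∀ i, 0 ≤ t i := fun i => mul_nonneg (by positivity) (abs_nonneg _)
  have hgsum : Summable (fun i : ℕ => ((1:ℝ)/2) ^ (i + 1)) := by
    simpa [pow_succ] using
      (summable_geometric_of_lt_one (by norm_num : (0:ℝ) ≤ 1/2)
        (by norm_num : (1:ℝ)/2 < 1)).mul_right ((1:ℝ)/2)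
  have htsum : Summable t := Summable.of_nonneg_of_le htnonneg htle hgsum
  have hδ : deltaEnum A m1 m2 = ∑' i, t i := rfl
  have hsplit : ∑ i ∈ Finset.range N, t i + ∑' i, t (i + N) = ∑' i, t i :=
    Summable.sum_add_tsum_nat_add N htsum
  have hfirst : ∑ i ∈ Finset.range N, t i = 0 := by
    refine Finset.sum_eq_zero (fun i hi => ?_)
    rw [ht_def]
    simp [hmeasEq i (Finset.mem_range.1 hi)]
  have htail : ∑' i, t (i + N) ≤ ((1:ℝ)/2) ^ N := by
    have hshift : Summable (fun i => t (i + N)) := (summable_nat_add_iff (f := t) N).2 htsum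
    have hgshift : Summable (fun i : ℕ => ((1:ℝ)/2) ^ (i + N + 1)) :=
      (summable_nat_add_iff (f := fun i : ℕ => ((1:ℝ)/2) ^ (i + 1)) N).2 hgsum
    have h1 : ∑' i, t (i + N) ≤ ∑' i : ℕ, ((1:ℝ)/2) ^ (i + N + 1) :=
      Summable.tsum_le_tsum (fun i => htle (i + N)) hshift hgshift
    have h2 : ∑' i : ℕ, ((1:ℝ)/2) ^ (i + N + 1) = ((1:ℝ)/2) ^ N * ∑' i : ℕ, ((1:ℝ)/2) ^ (i + 1) := by
      rw [← tsum_mul_left]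
      congr 1
      funext i
      rw [← pow_add]
      congr 1
      omega
    have h3 : ∑' i : ℕ, ((1:ℝ)/2) ^ (i + 1) = 1 := by
      have heq : (fun i : ℕ => ((1:ℝ)/2) ^ (i + 1)) = fun i : ℕ => (1:ℝ) / 2 / 2 ^ i :=
        funext fun i => by rw [one_div_pow, div_div, pow_succ']
      rw [heq]
      exact tsum_geometric_two' 1
    rw [h2, h3, mul_one] at h1
    exact h1
  calc deltaEnum A m1 m2 = ∑ i ∈ Finset.range N, t i + ∑' i, t (i + N) := by
        rw [hδ, hsplit]
    _ = ∑' i, t (i + N) := by rw [hfirst, zero_add]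
    _ ≤ ((1:ℝ)/2) ^ N := htail
    _ < ε := hN
end
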